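/- arXiv:1706.03124 — 9 statements merged into one kernel-verified Lean document; each statement's English description precedes it below -/
import Mathlib

section
/- Let x ∈ [0,1] be given by a Cantor series representation x = ∑_{k=1}^∞ ε_k/(q_1 q_2 ⋯ q_k). Then x is a rational number if and only if there exist an integer n ≥ 0 and a positive integer m such that σ^n(x) = σ^{n+m}(x), where σ^n(x) = ∑_{k=n+1}^∞ ε_k/(q_{n+1} q_{n+2} ⋯ q_k). -/
open Finset Filter

namespace CantorAux

variable (q ε : ℕ → ℕ)

noncomputable def S (n : ℕ) : ℝ :=
  ∑' k : ℕ, (ε (n + k) : ℝ) / ∏ i ∈ Finset.Ico n (n + k + 1), (q i : ℝ)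

lemma qpos (hq : ∀ k, 2 ≤ q k) (i : ℕ) : (0 : ℝ) < (q i : ℝ) := by
  have := hq i; exact_mod_cast Nat.lt_of_lt_of_le (by norm_num) this

lemma prodQ_pos (hq : ∀ k, 2 ≤ q k) (s : Finset ℕ) : 0 < ∏ i ∈ s, (q i : ℝ) :=
  Finset.prod_pos fun i _ => qpos q hq i

lemma two_pow_le_prod (hq : ∀ k, 2 ≤ q k) (n k : ℕ) :
    (2 : ℝ) ^ k ≤ ∏ i ∈ Finset.Ico n (n + k), (q i : ℝ) := by
  calc (2:ℝ) ^ k = ∏ i ∈ Finset.Ico n (n + k), (2:ℝ) := by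
        rw [Finset.prod_const, Nat.card_Ico, Nat.add_sub_cancel_left]
    _ ≤ _ := Finset.prod_le_prod (fun i _ => by norm_num) (fun i _ => by exact_mod_cast hq i)

lemma term_le (hq : ∀ k, 2 ≤ q k) (hε : ∀ k, ε k < q k) (n k : ℕ) :
    (ε (n + k) : ℝ) / ∏ i ∈ Finset.Ico n (n + k + 1), (q i : ℝ) ≤ (1/2 : ℝ) ^ k := by
  have hP : (2:ℝ)^k ≤ ∏ i ∈ Finset.Ico n (n + k), (q i : ℝ) := two_pow_le_prod q hq n k
  have hPpos : (0:ℝ) < ∏ i ∈ Finset.Ico n (n + k), (q i : ℝ) := prodQ_pos q hq _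
  have hsplit : ∏ i ∈ Finset.Ico n (n + k + 1), (q i : ℝ)
      = (∏ i ∈ Finset.Ico n (n + k), (q i : ℝ)) * (q (n+k) : ℝ) :=
    Finset.prod_Ico_succ_top (Nat.le_add_right n k) _
  rw [hsplit]
  have h1 : (ε (n + k) : ℝ) ≤ (q (n+k) : ℝ) := by
    exact_mod_cast (hε (n+k)).le
  calc (ε (n + k) : ℝ) / ((∏ i ∈ Finset.Ico n (n + k), (q i : ℝ)) * (q (n+k) : ℝ))
      ≤ (q (n+k) : ℝ) / ((∏ i ∈ Finset.Ico n (n + k), (q i : ℝ)) * (q (n+k) : ℝ)) := by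
        gcongr
    _ = 1 / ∏ i ∈ Finset.Ico n (n + k), (q i : ℝ) := by
        rw [mul_comm, ← div_div, div_self (qpos q hq _).ne', one_div]
    _ ≤ (1/2:ℝ)^k := by
        rw [div_pow, one_pow]
        exact one_div_le_one_div_of_le (by positivity) hP


lemma term_nonneg (n k : ℕ) :
    0 ≤ (ε (n + k) : ℝ) / ∏ i ∈ Finset.Ico n (n + k + 1), (q i : ℝ) := by
  positivity

lemma summable_term (hq : ∀ k, 2 ≤ q k) (hε : ∀ k, ε k < q k) (n : ℕ) :
    Summable (fun k : ℕ => (ε (n + k) : ℝ) / ∏ i ∈ Finset.Ico n (n + k + 1), (q i : ℝ)) := by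
  apply Summable.of_nonneg_of_le (term_nonneg q ε n) (term_le q ε hq hε n)
  exact summable_geometric_of_lt_one (by norm_num) (by norm_num)

lemma S_nonneg (n : ℕ) : 0 ≤ S q ε n :=
  tsum_nonneg (term_nonneg q ε n)

lemma partial_le (hq : ∀ k, 2 ≤ q k) (hε : ∀ k, ε k < q k) (n N : ℕ) :
    ∑ k ∈ Finset.range N, (ε (n + k) : ℝ) / ∏ i ∈ Finset.Ico n (n + k + 1), (q i : ℝ)
      ≤ 1 - 1 / ∏ i ∈ Finset.Ico n (n + N), (q i : ℝ) := by
  induction N with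
  | zero => simp
  | succ N ih =>
    rw [Finset.sum_range_succ]
    have hsplit : ∏ i ∈ Finset.Ico n (n + N + 1), (q i : ℝ)
        = (∏ i ∈ Finset.Ico n (n + N), (q i : ℝ)) * (q (n+N) : ℝ) :=
      Finset.prod_Ico_succ_top (Nat.le_add_right n N) _
    have hPpos : (0:ℝ) < ∏ i ∈ Finset.Ico n (n + N), (q i : ℝ) := prodQ_pos q hq _
    have hqpos := qpos q hq (n+N)
    have hterm : (ε (n + N) : ℝ) / ∏ i ∈ Finset.Ico n (n + N + 1), (q i : ℝ)
        ≤ 1 / ∏ i ∈ Finset.Ico n (n + N), (q i : ℝ)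
          - 1 / ∏ i ∈ Finset.Ico n (n + N + 1), (q i : ℝ) := by
      rw [hsplit]
      have h1 : (ε (n + N) : ℝ) ≤ (q (n+N) : ℝ) - 1 := by
        have h2 := hε (n+N)
        have h3 : (ε (n+N) : ℝ) + 1 ≤ (q (n+N) : ℝ) := by exact_mod_cast h2
        linarith
      calc (ε (n + N) : ℝ) / ((∏ i ∈ Finset.Ico n (n + N), (q i : ℝ)) * (q (n+N) : ℝ))
          ≤ ((q (n+N) : ℝ) - 1) / ((∏ i ∈ Finset.Ico n (n + N), (q i : ℝ)) * (q (n+N) : ℝ)) := by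
            gcongr
        _ = 1 / ∏ i ∈ Finset.Ico n (n + N), (q i : ℝ)
            - 1 / ((∏ i ∈ Finset.Ico n (n + N), (q i : ℝ)) * (q (n+N) : ℝ)) := by
            field_simp
    simp only [show n + (N+1) = n + N + 1 from by omega] at hterm ⊢
    rw [hsplit] at hterm ⊢
    linarith

lemma S_le_one (hq : ∀ k, 2 ≤ q k) (hε : ∀ k, ε k < q k) (n : ℕ) : S q ε n ≤ 1 := by
  apply Summable.tsum_le_of_sum_range_le (summable_term q ε hq hε n)
  intro N
  have := partial_le q ε hq hε n N
  have hPpos : (0:ℝ) < ∏ i ∈ Finset.Ico n (n + N), (q i : ℝ) := prodQ_pos q hq _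
  have : 1 / ∏ i ∈ Finset.Ico n (n + N), (q i : ℝ) > 0 := by positivity
  linarith [partial_le q ε hq hε n N]

lemma S_rec (hq : ∀ k, 2 ≤ q k) (hε : ∀ k, ε k < q k) (n : ℕ) :
    S q ε n = (ε n : ℝ) / (q n : ℝ) + S q ε (n + 1) / (q n : ℝ) := by
  have hs := summable_term q ε hq hε n
  rw [S, Summable.tsum_eq_zero_add hs]
  congr 1
  · simp
  · have : ∀ k : ℕ, (ε (n + (k+1)) : ℝ) / ∏ i ∈ Finset.Ico n (n + (k+1) + 1), (q i : ℝ)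
        = ((ε ((n+1) + k) : ℝ) / ∏ i ∈ Finset.Ico (n+1) ((n+1) + k + 1), (q i : ℝ)) / (q n : ℝ) := by
      intro k
      have h1 : n + (k+1) = (n+1) + k := by omega
      have h2 : ∏ i ∈ Finset.Ico n ((n+1) + k + 1), (q i : ℝ)
          = (q n : ℝ) * ∏ i ∈ Finset.Ico (n+1) ((n+1) + k + 1), (q i : ℝ) :=
        Finset.prod_eq_prod_Ico_succ_bot (by omega) _
      rw [h1, h2, div_div, mul_comm]
    simp_rw [this]
    rw [tsum_div_const]
    rfl

lemma S_split (hq : ∀ k, 2 ≤ q k) (hε : ∀ k, ε k < q k) (m n : ℕ) :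
    S q ε n = (∑ k ∈ Finset.range m, (ε (n + k) : ℝ) / ∏ i ∈ Finset.Ico n (n + k + 1), (q i : ℝ))
      + S q ε (n + m) / ∏ i ∈ Finset.Ico n (n + m), (q i : ℝ) := by
  induction m with
  | zero => simp
  | succ m ih =>
    rw [ih, Finset.sum_range_succ]
    have hrec := S_rec q ε hq hε (n + m)
    have hsplit : ∏ i ∈ Finset.Ico n (n + m + 1), (q i : ℝ)
        = (∏ i ∈ Finset.Ico n (n + m), (q i : ℝ)) * (q (n+m) : ℝ) :=
      Finset.prod_Ico_succ_top (Nat.le_add_right n m) _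
    have hPpos : (0:ℝ) < ∏ i ∈ Finset.Ico n (n + m), (q i : ℝ) := prodQ_pos q hq _
    have hqpos := qpos q hq (n+m)
    have h1 : n + (m+1) = (n + m) + 1 := by omega
    rw [h1, hsplit, hrec]
    field_simp
    ring


lemma S_zero (x : ℝ)
    (hx : x = ∑' k : ℕ, (ε k : ℝ) / ∏ i ∈ Finset.range (k + 1), (q i : ℝ)) :
    x = S q ε 0 := by
  rw [hx, S]
  exact tsum_congr fun k => by simp only [Nat.zero_add, ← Finset.range_eq_Ico]

end CantorAux

open CantorAux in
/-- (Serbenyuk) A number `x ∈ [0,1]` represented by the Cantor series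
`x = ∑ ε_k / (q_1 ⋯ q_k)` is rational iff `σ^n(x) = σ^{n+m}(x)` for some `n ≥ 0`, `m ≥ 1`,
where `σ^n(x) = ∑_{k=n+1}^∞ ε_k / (q_{n+1} ⋯ q_k)`.
(Sequences are 0-indexed: `q i`, `ε i` denote the paper's `q_{i+1}`, `ε_{i+1}`.) -/
theorem cantor_rational_iff_shift_eq
    (q ε : ℕ → ℕ) (hq : ∀ k, 2 ≤ q k) (hε : ∀ k, ε k < q k)
    (x : ℝ) (hmem : x ∈ Set.Icc (0 : ℝ) 1)
    (hx : x = ∑' k : ℕ, (ε k : ℝ) / ∏ i ∈ Finset.range (k + 1), (q i : ℝ)) :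
    (∃ r : ℚ, x = (r : ℝ)) ↔
      ∃ n m : ℕ, 0 < m ∧
        (∑' k : ℕ, (ε (n + k) : ℝ) / ∏ i ∈ Finset.Ico n (n + k + 1), (q i : ℝ)) =
        (∑' k : ℕ, (ε (n + m + k) : ℝ) / ∏ i ∈ Finset.Ico (n + m) (n + m + k + 1), (q i : ℝ)) := by
  have hx0 : x = S q ε 0 := S_zero q ε x hx
  constructor
  · rintro ⟨r, hr⟩
    set d : ℕ := r.den with hd
    have hdpos : 0 < d := r.pos
    have hdR : (0:ℝ) < (d:ℝ) := by exact_mod_cast hdpos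
    have key : ∀ n : ℕ, ∃ c : ℤ, 0 ≤ c ∧ (c:ℤ) ≤ (d:ℤ) ∧ S q ε n = (c : ℝ) / (d : ℝ) := by
      have bound : ∀ n : ℕ, ∀ c : ℤ, S q ε n = (c : ℝ) / (d : ℝ) →
          0 ≤ c ∧ (c:ℤ) ≤ (d:ℤ) := by
        intro n c hc
        have h0 := S_nonneg q ε n
        have h1 := S_le_one q ε hq hε n
        rw [hc] at h0 h1
        constructor
        · have : (0:ℝ) ≤ (c:ℝ) := by
            by_contra hcon
            push_neg at hcon
            have : (c:ℝ)/(d:ℝ) < 0 := div_neg_of_neg_of_pos hcon hdR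
            linarith
          exact_mod_cast this
        · have : (c:ℝ) ≤ (d:ℝ) := by
            rw [div_le_one hdR] at h1; exact h1
          exact_mod_cast this
      intro n
      induction n with
      | zero =>
        refine ⟨r.num, ?_⟩
        have hS0 : S q ε 0 = (r.num : ℝ) / (d : ℝ) := by
          rw [← hx0, hr, hd]
          rw [Rat.cast_def]
        exact ⟨(bound 0 r.num hS0).1, (bound 0 r.num hS0).2, hS0⟩
      | succ n ih =>
        obtain ⟨c, _, _, hc⟩ := ih
        have hrec := S_rec q ε hq hε n
        have hqn := qpos q hq n
        have hS : S q ε (n+1) = ((q n : ℤ) * c - (ε n : ℤ) * (d:ℤ) : ℤ) / (d : ℝ) := by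
          have : S q ε (n+1) = (q n : ℝ) * S q ε n - (ε n : ℝ) := by
            rw [hrec]; field_simp; ring
          rw [this, hc]
          push_cast
          field_simp
        exact ⟨_, (bound (n+1) _ hS).1, (bound (n+1) _ hS).2, hS⟩
    choose c hc0 hc1 hc2 using key
    have : ∃ a b : ℕ, a ≠ b ∧ c a = c b := by
      obtain ⟨a, b, hab, hfe⟩ := Finite.exists_ne_map_eq_of_infinite
        (fun n : ℕ => (⟨c n, Finset.mem_Icc.mpr ⟨hc0 n, hc1 n⟩⟩ : {z : ℤ // z ∈ Finset.Icc 0 (d:ℤ)}))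
      exact ⟨a, b, hab, by simpa using congrArg Subtype.val hfe⟩
    obtain ⟨a, b, hab, hcab⟩ := this
    rcases hab.lt_or_gt with h | h
    · refine ⟨a, b - a, by omega, ?_⟩
      show S q ε a = S q ε (a + (b - a))
      rw [show a + (b - a) = b from by omega, hc2 a, hc2 b, hcab]
    · refine ⟨b, a - b, by omega, ?_⟩
      show S q ε b = S q ε (b + (a - b))
      rw [show b + (a - b) = a from by omega, hc2 a, hc2 b, hcab]
  · rintro ⟨n, m, hm, heq⟩
    have heq' : S q ε n = S q ε (n + m) := heq
    have hsplit := S_split q ε hq hε m n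
    rw [← heq'] at hsplit
    have hP2 : (2:ℝ) ^ m ≤ ∏ i ∈ Finset.Ico n (n + m), (q i : ℝ) := two_pow_le_prod q hq n m
    have hP1 : (1:ℝ) < ∏ i ∈ Finset.Ico n (n + m), (q i : ℝ) := by
      have : (1:ℝ) < 2 ^ m := by
        calc (1:ℝ) < 2 := by norm_num
          _ ≤ 2 ^ m := by
            calc (2:ℝ) = 2^1 := by norm_num
              _ ≤ 2^m := pow_le_pow_right₀ (by norm_num) hm
      linarith
    set AQ : ℚ := ∑ k ∈ Finset.range m, (ε (n + k) : ℚ) / ∏ i ∈ Finset.Ico n (n + k + 1), (q i : ℚ) with hAQ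
    set PQ : ℚ := ∏ i ∈ Finset.Ico n (n + m), (q i : ℚ) with hPQdef
    have hPQcast : ((PQ : ℚ) : ℝ) = ∏ i ∈ Finset.Ico n (n + m), (q i : ℝ) := by
      rw [hPQdef]; push_cast; rfl
    have hAQcast : ((AQ : ℚ) : ℝ) = ∑ k ∈ Finset.range m, (ε (n + k) : ℝ) / ∏ i ∈ Finset.Ico n (n + k + 1), (q i : ℝ) := by
      rw [hAQ]; push_cast; rfl
    have hPQ1 : (1:ℚ) < PQ := by
      have : (1:ℝ) < ((PQ:ℚ):ℝ) := by rw [hPQcast]; exact hP1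
      exact_mod_cast this
    have hSn : S q ε n = ((AQ * PQ / (PQ - 1) : ℚ) : ℝ) := by
      push_cast
      rw [hPQcast, hAQcast]
      rw [eq_div_iff (by linarith : (∏ i ∈ Finset.Ico n (n + m), (q i : ℝ)) - 1 ≠ 0)]
      have hPne : (∏ i ∈ Finset.Ico n (n + m), (q i : ℝ)) ≠ 0 := by linarith
      field_simp at hsplit
      ring_nf at hsplit ⊢
      linarith
    have hsplit0 := S_split q ε hq hε n 0
    simp only [Nat.zero_add] at hsplit0
    set BQ : ℚ := ∑ k ∈ Finset.range n, (ε k : ℚ) / ∏ i ∈ Finset.Ico 0 (k + 1), (q i : ℚ) with hBQ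
    set Q0Q : ℚ := ∏ i ∈ Finset.Ico 0 n, (q i : ℚ) with hQ0Q
    refine ⟨BQ + (AQ * PQ / (PQ - 1)) / Q0Q, ?_⟩
    rw [hx0, hsplit0, hSn, hBQ, hQ0Q, hAQ, hPQdef]
    push_cast
    ring
end

section
/- Let x ∈ [0,1] be given by a Cantor series representation x = ∑_{k=1}^∞ ε_k/(q_1 q_2 ⋯ q_k). Then x is a rational number if and only if there exist an integer n ≥ 0 and a positive integer m such that ∑_{k=n+1}^∞ ε_k/(q_1 q_2 ⋯ q_k) = q_{n+1} q_{n+2} ⋯ q_{n+m} · ∑_{k=n+m+1}^∞ ε_k/(q_1 q_2 ⋯ q_k). -/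
open Finset Filter

namespace CantorAux

noncomputable def P (q : ℕ → ℕ) (n : ℕ) : ℝ := ∏ i ∈ Finset.range n, (q i : ℝ)

noncomputable def f (q ε : ℕ → ℕ) (k : ℕ) : ℝ := (ε k : ℝ) / P q (k + 1)

noncomputable def T (q ε : ℕ → ℕ) (n : ℕ) : ℝ := ∑' k : ℕ, f q ε (n + k)

variable {q ε : ℕ → ℕ}

lemma P_pos (hq : ∀ k, 2 ≤ q k) (n : ℕ) : 0 < P q n :=
  Finset.prod_pos fun i _ => by
    have : 0 < q i := lt_of_lt_of_le (by norm_num) (hq i)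
    exact_mod_cast this

lemma P_succ (n : ℕ) : P q (n + 1) = P q n * q n := Finset.prod_range_succ _ _

lemma two_pow_le_P (hq : ∀ k, 2 ≤ q k) (n : ℕ) : (2 : ℝ) ^ n ≤ P q n := by
  rw [P]
  calc (2 : ℝ) ^ n = ∏ _i ∈ Finset.range n, (2 : ℝ) := by
        rw [Finset.prod_const, Finset.card_range]
    _ ≤ _ := Finset.prod_le_prod (fun i _ => by norm_num) (fun i _ => by exact_mod_cast hq i)

lemma f_nonneg (hq : ∀ k, 2 ≤ q k) (k : ℕ) : 0 ≤ f q ε k :=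
  div_nonneg (Nat.cast_nonneg _) (P_pos hq (k + 1)).le

lemma f_le_geom (hq : ∀ k, 2 ≤ q k) (hε : ∀ k, ε k < q k) (k : ℕ) :
    f q ε k ≤ (1 / 2 : ℝ) ^ k := by
  have hPk := P_pos hq k
  have hqk : (0 : ℝ) < q k := by
    have : 0 < q k := lt_of_lt_of_le (by norm_num) (hq k)
    exact_mod_cast this
  have h1 : f q ε k ≤ 1 / P q k := by
    rw [f, P_succ]
    rw [div_le_div_iff₀ (by positivity) hPk]
    have : (ε k : ℝ) ≤ q k := by exact_mod_cast (hε k).le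
    nlinarith
  have h2 : (1 : ℝ) / P q k ≤ (1 / 2) ^ k := by
    rw [div_pow, one_pow]
    exact one_div_le_one_div_of_le (by positivity) (two_pow_le_P hq k)
  linarith

lemma summable_f (hq : ∀ k, 2 ≤ q k) (hε : ∀ k, ε k < q k) : Summable (f q ε) :=
  Summable.of_nonneg_of_le (f_nonneg hq) (f_le_geom hq hε)
    (summable_geometric_of_lt_one (by norm_num) (by norm_num))

lemma summable_tail (hq : ∀ k, 2 ≤ q k) (hε : ∀ k, ε k < q k) (n : ℕ) :
    Summable (fun k => f q ε (n + k)) := by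
  have h := (summable_nat_add_iff n).2 (summable_f hq hε)
  have : (fun k => f q ε (n + k)) = fun k => f q ε (k + n) := by
    funext k; rw [add_comm]
  rw [this]; exact h

lemma tail_split (hq : ∀ k, 2 ≤ q k) (hε : ∀ k, ε k < q k) (n : ℕ) :
    (∑' k : ℕ, f q ε k) = (∑ k ∈ Finset.range n, f q ε k) + T q ε n := by
  rw [T]
  have : (fun k => f q ε (n + k)) = fun k => f q ε (k + n) := by
    funext k; rw [add_comm]
  rw [this]
  exact (Summable.sum_add_tsum_nat_add n (summable_f hq hε)).symm

lemma T_succ (hq : ∀ k, 2 ≤ q k) (hε : ∀ k, ε k < q k) (n : ℕ) :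
    T q ε n = f q ε n + T q ε (n + 1) := by
  rw [T, Summable.tsum_eq_zero_add (summable_tail hq hε n)]
  congr 1
  rw [T]
  congr 1
  funext k
  congr 1
  omega

lemma T_nonneg (hq : ∀ k, 2 ≤ q k) (n : ℕ) : 0 ≤ T q ε n :=
  tsum_nonneg fun k => f_nonneg hq _

lemma partial_bound (hq : ∀ k, 2 ≤ q k) (hε : ∀ k, ε k < q k) (n N : ℕ) :
    (∑ k ∈ Finset.range N, f q ε (n + k)) ≤ 1 / P q n - 1 / P q (n + N) := by
  induction N with
  | zero => simp
  | succ N ih =>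
    rw [Finset.sum_range_succ]
    have key : f q ε (n + N) ≤ 1 / P q (n + N) - 1 / P q (n + N + 1) := by
      have hP := P_pos hq (n + N)
      have hP1 := P_pos hq (n + N + 1)
      have hεq : (ε (n + N) : ℝ) + 1 ≤ (q (n + N) : ℝ) := by exact_mod_cast hε (n + N)
      have hP1eq : P q (n + N + 1) = P q (n + N) * q (n + N) := P_succ _
      have hcalc : (1 / P q (n + N) - 1 / P q (n + N + 1)) * P q (n + N + 1)
          = (q (n + N) : ℝ) - 1 := by
        have h2 := hq (n + N)
        have hq0 : (q (n + N) : ℝ) ≠ 0 := by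
          have : 0 < q (n + N) := by omega
          exact_mod_cast this.ne'
        rw [hP1eq]
        field_simp
      rw [f, div_le_iff₀ hP1, hcalc]
      linarith
    have : n + (N + 1) = n + N + 1 := by omega
    rw [this]
    linarith

lemma T_le (hq : ∀ k, 2 ≤ q k) (hε : ∀ k, ε k < q k) (n : ℕ) :
    T q ε n ≤ 1 / P q n := by
  apply Summable.tsum_le_of_sum_range_le (summable_tail hq hε n)
  intro N
  have h := partial_bound hq hε (ε := ε) n N
  have h2 : 0 < 1 / P q (n + N) := one_div_pos.mpr (P_pos hq (n + N))
  linarith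

lemma y_rec (hq : ∀ k, 2 ≤ q k) (hε : ∀ k, ε k < q k) (n : ℕ) :
    P q (n + 1) * T q ε (n + 1) = (q n : ℝ) * (P q n * T q ε n) - ε n := by
  have h := T_succ hq hε (ε := ε) n
  have hP1 : (0 : ℝ) < P q (n + 1) := P_pos hq (n + 1)
  have : P q (n + 1) * T q ε n = P q (n + 1) * f q ε n + P q (n + 1) * T q ε (n + 1) := by
    rw [h]; ring
  have hf : P q (n + 1) * f q ε n = ε n := by
    rw [f]; field_simp
  rw [hf] at this
  rw [P_succ] at this ⊢
  nlinarith [this]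

lemma exists_int (hq : ∀ k, 2 ≤ q k) (hε : ∀ k, ε k < q k) (n m : ℕ) :
    ∃ A : ℤ, P q (n + m) * T q ε (n + m) =
      (∏ i ∈ Finset.Ico n (n + m), (q i : ℝ)) * (P q n * T q ε n) - A := by
  induction m with
  | zero => exact ⟨0, by simp⟩
  | succ m ih =>
    obtain ⟨A, hA⟩ := ih
    refine ⟨(q (n + m) : ℤ) * A + ε (n + m), ?_⟩
    have h1 : n + (m + 1) = (n + m) + 1 := by omega
    rw [h1, y_rec hq hε (n + m), hA, Finset.prod_Ico_succ_top (by omega : n ≤ n + m)]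
    push_cast
    ring

end CantorAux

open CantorAux in
/-- (Serbenyuk) A number `x ∈ [0,1]` represented by the Cantor series
`x = ∑ ε_k / (q_1 ⋯ q_k)` is rational iff there exist `n ≥ 0`, `m ≥ 1` with
`∑_{k=n+1}^∞ ε_k/(q_1⋯q_k) = q_{n+1}⋯q_{n+m} ⬝ ∑_{k=n+m+1}^∞ ε_k/(q_1⋯q_k)`.
(Sequences are 0-indexed.) -/
theorem cantor_rational_iff_tail_eq
    (q ε : ℕ → ℕ) (hq : ∀ k, 2 ≤ q k) (hε : ∀ k, ε k < q k)
    (x : ℝ) (hmem : x ∈ Set.Icc (0 : ℝ) 1)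
    (hx : x = ∑' k : ℕ, (ε k : ℝ) / ∏ i ∈ Finset.range (k + 1), (q i : ℝ)) :
    (∃ r : ℚ, x = (r : ℝ)) ↔
      ∃ n m : ℕ, 0 < m ∧
        (∑' k : ℕ, (ε (n + k) : ℝ) / ∏ i ∈ Finset.range (n + k + 1), (q i : ℝ)) =
        (∏ i ∈ Finset.Ico n (n + m), (q i : ℝ)) *
          (∑' k : ℕ, (ε (n + m + k) : ℝ) / ∏ i ∈ Finset.range (n + m + k + 1), (q i : ℝ)) := by
  -- translate the statement's sums into T
  have hT : ∀ n : ℕ, (∑' k : ℕ, (ε (n + k) : ℝ) / ∏ i ∈ Finset.range (n + k + 1), (q i : ℝ))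
      = T q ε n := by
    intro n; rfl
  have hx' : x = ∑' k : ℕ, f q ε k := hx
  constructor
  · -- rational → tail equality
    rintro ⟨r, hr⟩
    -- g n is an integer equal to r.den * (P n * T n)
    set b : ℕ := r.den with hb
    have hbpos : 0 < b := r.pos
    have hbx : (b : ℝ) * x = (r.num : ℝ) := by
      rw [hr]
      have hden : ((r.den : ℚ)) ≠ 0 := by
        exact_mod_cast r.den_ne_zero
      have : (b : ℚ) * r = r.num := by
        conv_lhs => rw [← Rat.num_div_den r]
        rw [hb]
        field_simp
      exact_mod_cast congrArg (Rat.cast : ℚ → ℝ) this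
    set g : ℕ → ℤ := fun n =>
      (∏ i ∈ Finset.range n, (q i : ℤ)) * r.num -
        (b : ℤ) * ∑ k ∈ Finset.range n, (ε k : ℤ) * ∏ i ∈ Finset.Ico (k + 1) n, (q i : ℤ)
      with hg
    have hgval : ∀ n : ℕ, (g n : ℝ) = (b : ℝ) * (P q n * T q ε n) := by
      intro n
      have hsplit := tail_split hq hε (ε := ε) n
      have hTn : T q ε n = x - ∑ k ∈ Finset.range n, f q ε k := by
        rw [hx', hsplit]; ring
      have hPS : P q n * (∑ k ∈ Finset.range n, f q ε k)
          = ∑ k ∈ Finset.range n, (ε k : ℝ) * ∏ i ∈ Finset.Ico (k + 1) n, (q i : ℝ) := by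
        rw [Finset.mul_sum]
        apply Finset.sum_congr rfl
        intro k hk
        have hkn : k + 1 ≤ n := Finset.mem_range.1 hk
        have hPn : P q n = P q (k + 1) * ∏ i ∈ Finset.Ico (k + 1) n, (q i : ℝ) := by
          rw [P, P, ← Finset.prod_range_mul_prod_Ico _ hkn]
        rw [hPn, f]
        have := P_pos hq (k + 1)
        field_simp
      rw [hg]
      push_cast
      have hP : (∏ i ∈ Finset.range n, (q i : ℝ)) = P q n := rfl
      rw [hP, hTn, ← hPS, ← hbx]
      ring
    have hg0 : ∀ n : ℕ, 0 ≤ g n ∧ g n ≤ (b : ℤ) := by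
      intro n
      have h1 : (0 : ℝ) ≤ (g n : ℝ) := by
        rw [hgval]
        have := T_nonneg (ε := ε) hq n
        have := P_pos hq n
        positivity
      have h2 : (g n : ℝ) ≤ (b : ℝ) := by
        rw [hgval]
        have hT1 : P q n * T q ε n ≤ 1 := by
          have h := T_le hq hε (ε := ε) n
          have hP := P_pos hq n
          rw [le_div_iff₀ hP] at h
          linarith [h]
        have : (0:ℝ) < b := by exact_mod_cast hbpos
        nlinarith
      constructor
      · exact_mod_cast h1
      · exact_mod_cast h2
    -- pigeonhole
    have : ∃ a a' : ℕ, a < a' ∧ g a = g a' := by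
      let G : ℕ → Finset.Icc (0 : ℤ) (b : ℤ) := fun n =>
        ⟨g n, Finset.mem_Icc.2 ⟨(hg0 n).1, (hg0 n).2⟩⟩
      obtain ⟨a, a', hne, heq⟩ := Finite.exists_ne_map_eq_of_infinite G
      have hgeq : g a = g a' := by
        simpa [G, Subtype.ext_iff] using heq
      rcases lt_or_gt_of_ne hne with h | h
      · exact ⟨a, a', h, hgeq⟩
      · exact ⟨a', a, h, hgeq.symm⟩
    obtain ⟨a, a', haa, hgeq⟩ := this
    refine ⟨a, a' - a, by omega, ?_⟩
    have hna : a + (a' - a) = a' := by omega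
    rw [hT, hna, hT]
    -- from g a = g a' deduce y a = y a'
    have hya : P q a * T q ε a = P q a' * T q ε a' := by
      have h1 : (b : ℝ) * (P q a * T q ε a) = (b : ℝ) * (P q a' * T q ε a') := by
        rw [← hgval, ← hgval, hgeq]
      have hb0 : (b : ℝ) ≠ 0 := by positivity
      exact mul_left_cancel₀ hb0 h1
    have hPa' : P q a' = P q a * ∏ i ∈ Finset.Ico a a', (q i : ℝ) := by
      rw [P, P, ← Finset.prod_range_mul_prod_Ico _ haa.le]
    rw [hPa'] at hya
    have hPa := P_pos hq a
    have := mul_left_cancel₀ (ne_of_gt hPa) (by linarith [hya] : P q a * T q ε a = P q a * ((∏ i ∈ Finset.Ico a a', (q i : ℝ)) * T q ε a'))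
    exact this
  · -- tail equality → rational
    rintro ⟨n, m, hm, heq⟩
    rw [hT, hT] at heq
    obtain ⟨A, hA⟩ := exists_int hq hε (ε := ε) n m
    set Q : ℝ := ∏ i ∈ Finset.Ico n (n + m), (q i : ℝ) with hQ
    set Nq : ℕ := ∏ i ∈ Finset.Ico n (n + m), q i with hNq
    have hQN : Q = (Nq : ℝ) := by rw [hQ, hNq]; push_cast; ring
    have hNq2 : 2 ≤ Nq := by
      rw [hNq]
      have hmem : n ∈ Finset.Ico n (n + m) := Finset.mem_Ico.2 ⟨le_refl n, by omega⟩
      calc 2 ≤ q n := hq n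
        _ ≤ ∏ i ∈ Finset.Ico n (n + m), q i :=
          Finset.single_le_prod' (fun i _ => le_trans (by norm_num) (hq i)) hmem
    -- y n = y (n+m)
    have hPnm : P q (n + m) = P q n * Q := by
      rw [P, P, hQ, ← Finset.prod_range_mul_prod_Ico _ (by omega : n ≤ n + m)]
    have hyy : P q (n + m) * T q ε (n + m) = P q n * T q ε n := by
      rw [hPnm, heq]; ring
    rw [hyy] at hA
    -- (Q - 1) * y n = A
    have hykey : (Q - 1) * (P q n * T q ε n) = A := by linarith [hA]
    have hQ1 : (1 : ℝ) ≤ Q - 1 := by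
      rw [hQN]
      have : (2 : ℝ) ≤ (Nq : ℝ) := by exact_mod_cast hNq2
      linarith
    have hPn := P_pos hq n
    refine ⟨(∑ k ∈ Finset.range n, (ε k : ℚ) / ∏ i ∈ Finset.range (k + 1), (q i : ℚ)) +
      (A : ℚ) / (((Nq : ℚ) - 1) * ∏ i ∈ Finset.range n, (q i : ℚ)), ?_⟩
    have hxsplit : x = (∑ k ∈ Finset.range n, f q ε k) + T q ε n := by
      rw [hx']; exact tail_split hq hε n
    have hTval : T q ε n = (A : ℝ) / ((Q - 1) * P q n) := by
      rw [eq_div_iff (by positivity)]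
      linarith [hykey]
    rw [hxsplit, hTval]
    push_cast
    congr 1
    rw [hQN]
    simp only [P]
end

section
/- Let p be an integer and r a positive integer with gcd(p,r) = 1, and suppose the rational number x = p/r is representable by an alternating Cantor series x = ∑_{n=1}^∞ (−1)^n ε_n/(q_1 q_2 ⋯ q_n). Then x admits a finite expansion by this series (i.e., a representation with ε_n = 0 for all sufficiently large n) if and only if there exists a positive integer n_0 such that r divides q_1 q_2 ⋯ q_{n_0}. -/
open Finset Filter

def AAx (q : ℕ → ℕ) (n : ℕ) : ℤ :=
  ∑ i ∈ Finset.range n, if Even i then ((q i : ℤ) - 1) * ∏ j ∈ Finset.Ico (i+1) n, (q j : ℤ) else 0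

def BBx (q : ℕ → ℕ) (n : ℕ) : ℤ :=
  ∑ i ∈ Finset.range n, if ¬ Even i then ((q i : ℤ) - 1) * ∏ j ∈ Finset.Ico (i+1) n, (q j : ℤ) else 0

lemma AAx_succ (q : ℕ → ℕ) (n : ℕ) :
    AAx q (n+1) = (q n : ℤ) * AAx q n + (if Even n then (q n : ℤ) - 1 else 0) := by
  unfold AAx
  rw [Finset.sum_range_succ, Finset.Ico_self, Finset.prod_empty, Finset.mul_sum]
  congr 1
  · apply Finset.sum_congr rfl
    intro i hi
    have hi' : i + 1 ≤ n := Finset.mem_range.mp hi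
    rw [Finset.prod_Ico_succ_top hi']
    split <;> ring
  · split <;> simp

lemma BBx_succ (q : ℕ → ℕ) (n : ℕ) :
    BBx q (n+1) = (q n : ℤ) * BBx q n + (if ¬ Even n then (q n : ℤ) - 1 else 0) := by
  unfold BBx
  rw [Finset.sum_range_succ, Finset.Ico_self, Finset.prod_empty, Finset.mul_sum]
  congr 1
  · apply Finset.sum_congr rfl
    intro i hi
    have hi' : i + 1 ≤ n := Finset.mem_range.mp hi
    rw [Finset.prod_Ico_succ_top hi']
    split <;> ring
  · split <;> simp

lemma repInt (q : ℕ → ℕ) (hq : ∀ k, 2 ≤ q k) :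
    ∀ (n : ℕ) (v : ℤ), -(AAx q n) ≤ v → v ≤ BBx q n →
    ∃ ε : ℕ → ℕ, (∀ i, ε i < q i) ∧ (∀ i, n ≤ i → ε i = 0) ∧
      v = ∑ i ∈ Finset.range n, (-1)^(i+1) * (ε i : ℤ) * ∏ j ∈ Finset.Ico (i+1) n, (q j : ℤ) := by
  intro n
  induction n with
  | zero =>
    intro v h1 h2
    refine ⟨fun _ => 0, fun i => by show (0:ℕ) < q i; have := hq i; omega, fun _ _ => rfl, ?_⟩
    simp [AAx, BBx] at h1 h2
    simp; omega
  | succ n IH =>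
    intro v h1 h2
    have hqn : (0 : ℤ) < (q n : ℤ) := by have := hq n; exact_mod_cast by omega
    set s : ℤ := (-1)^(n+1) with hs
    have hss : s * s = 1 := by rw [hs, ← pow_add]; exact (neg_one_pow_eq_one_iff_even (by norm_num)).2 ⟨n+1, by ring⟩
    set e : ℤ := (s * v) % (q n) with he
    have he0 : 0 ≤ e := Int.emod_nonneg _ (by omega)
    have he1 : e < (q n : ℤ) := Int.emod_lt_of_pos _ hqn
    have hdvd : (q n : ℤ) ∣ v - s * e := by
      have hx1 : (q n : ℤ) ∣ s * v - e := Int.dvd_self_sub_of_emod_eq rfl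
      have hx2 : v - s * e = s * (s * v - e) := by rw [mul_sub, ← mul_assoc, hss, one_mul]
      rw [hx2]; exact Dvd.dvd.mul_left hx1 s
    set v' : ℤ := (v - s * e) / (q n) with hv'
    have hvv : (q n : ℤ) * v' = v - s * e := Int.mul_ediv_cancel' hdvd
    have hAB : -(AAx q n) ≤ v' ∧ v' ≤ BBx q n := by
      rcases Nat.even_or_odd n with hn | hn
      · have hsv : s = -1 := Odd.neg_one_pow (by exact Even.add_one hn)
        rw [AAx_succ, if_pos hn] at h1
        rw [BBx_succ, if_neg (by simpa using hn)] at h2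
        constructor
        · nlinarith [hvv, he0, he1]
        · nlinarith [hvv, he0, he1]
      · have hsv : s = 1 := Even.neg_one_pow (by exact Odd.add_one hn)
        rw [AAx_succ, if_neg (by simpa using hn)] at h1
        rw [BBx_succ, if_pos (by simpa using hn)] at h2
        constructor
        · nlinarith [hvv, he0, he1]
        · nlinarith [hvv, he0, he1]
    obtain ⟨ε', hlt, hz, hsum⟩ := IH v' hAB.1 hAB.2
    refine ⟨fun i => if i = n then e.toNat else ε' i, ?_, ?_, ?_⟩
    · intro i
      by_cases h : i = n
      · subst h
        show (if i = i then e.toNat else ε' i) < q i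
        rw [if_pos rfl]; omega
      · show (if i = n then e.toNat else ε' i) < q i
        rw [if_neg h]; exact hlt i
    · intro i hi
      have : i ≠ n := by omega
      simpa [this] using hz i (by omega)
    · rw [Finset.sum_range_succ]
      have hlast : (-1:ℤ)^(n+1) * ((if n = n then e.toNat else ε' n : ℕ) : ℤ) * ∏ j ∈ Finset.Ico (n+1) (n+1), (q j : ℤ) = s * e := by
        simp [hs, Int.toNat_of_nonneg he0]
      rw [hlast]
      have hrest : ∑ i ∈ Finset.range n, (-1:ℤ)^(i+1) * ((if i = n then e.toNat else ε' i : ℕ) : ℤ) * ∏ j ∈ Finset.Ico (i+1) (n+1), (q j : ℤ)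
          = (∑ i ∈ Finset.range n, (-1:ℤ)^(i+1) * (ε' i : ℤ) * ∏ j ∈ Finset.Ico (i+1) n, (q j : ℤ)) * (q n : ℤ) := by
        rw [Finset.sum_mul]
        apply Finset.sum_congr rfl
        intro i hi
        have hi' : i < n := Finset.mem_range.mp hi
        rw [Finset.prod_Ico_succ_top (by omega), if_neg (by omega)]
        ring
      rw [hrest, ← hsum]
      linarith [hvv]


def QQ (q : ℕ → ℕ) (n : ℕ) : ℕ := ∏ i ∈ Finset.range n, q i

lemma QQ_pos (q : ℕ → ℕ) (hq : ∀ k, 2 ≤ q k) (n : ℕ) : 0 < QQ q n :=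
  Finset.prod_pos (fun i _ => by have := hq i; omega)

lemma QQ_ge (q : ℕ → ℕ) (hq : ∀ k, 2 ≤ q k) (n : ℕ) : 2^n ≤ QQ q n := by
  have : (2:ℕ)^n = ∏ i ∈ Finset.range n, 2 := by simp
  rw [this]
  exact Finset.prod_le_prod (fun i _ => by omega) (fun i _ => hq i)

lemma tele_partial (q : ℕ → ℕ) (hq : ∀ k, 2 ≤ q k) (k : ℕ) :
    ∀ m : ℕ, ∑ i ∈ Finset.range m, ((q (i+k) : ℝ) - 1) / (QQ q (i+k+1) : ℝ)
      = 1 / (QQ q k : ℝ) - 1 / (QQ q (k+m) : ℝ) := by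
  intro m
  induction m with
  | zero => simp
  | succ m IH =>
    rw [Finset.sum_range_succ, IH]
    have h1 : QQ q (k+m+1) = QQ q (k+m) * q (k+m) := Finset.prod_range_succ _ _
    have h2 : (QQ q (k+m) : ℝ) ≠ 0 := by
      have := QQ_pos q hq (k+m); positivity
    have h3 : (q (k+m) : ℝ) ≠ 0 := by have := hq (k+m); positivity
    have hmk : m + k = k + m := by ring
    rw [show k + (m+1) = (k+m)+1 by ring, hmk, h1]
    push_cast
    field_simp
    ring

lemma tele_hasSum (q : ℕ → ℕ) (hq : ∀ k, 2 ≤ q k) (k : ℕ) :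
    HasSum (fun i => ((q (i+k) : ℝ) - 1) / (QQ q (i+k+1) : ℝ)) (1 / (QQ q k : ℝ)) := by
  rw [hasSum_iff_tendsto_nat_of_nonneg]
  · have hts : Tendsto (fun m => 1 / (QQ q k : ℝ) - 1 / (QQ q (k+m) : ℝ)) atTop
        (nhds (1 / (QQ q k : ℝ) - 0)) := by
      apply Tendsto.sub tendsto_const_nhds
      apply squeeze_zero (g := fun m => (1/2 : ℝ)^m)
      · intro m; positivity
      · intro m
        have h1 : (2:ℝ)^m ≤ (QQ q (k+m) : ℝ) := by
          calc (2:ℝ)^m ≤ (2:ℝ)^(k+m) := by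
                apply pow_le_pow_right₀ (by norm_num) (by omega)
            _ ≤ (QQ q (k+m) : ℝ) := by exact_mod_cast QQ_ge q hq (k+m)
        have h2 : (0:ℝ) < 2^m := by positivity
        rw [div_pow, one_pow, one_div, one_div]
        exact inv_anti₀ h2 h1
      · exact tendsto_pow_atTop_nhds_zero_of_lt_one (by norm_num) (by norm_num)
    simpa using hts.congr (fun m => (tele_partial q hq k m).symm)
  · intro i
    have h1 := hq (i+k)
    have h2 := QQ_pos q hq (i+k+1)
    apply div_nonneg
    · have : (1:ℝ) ≤ (q (i+k) : ℝ) := by exact_mod_cast by omega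
      linarith
    · positivity

lemma prod_cast (q : ℕ → ℕ) (m : ℕ) : ∏ i ∈ Finset.range m, (q i : ℝ) = (QQ q m : ℝ) := by
  rw [QQ]; push_cast; rfl

lemma QQ_factor (q : ℕ → ℕ) {n k : ℕ} (h : n < k) :
    (QQ q k : ℝ) = (QQ q (n+1) : ℝ) * ∏ j ∈ Finset.Ico (n+1) k, (q j : ℝ) := by
  have := Finset.prod_range_mul_prod_Ico q (show n+1 ≤ k by omega)
  rw [QQ, QQ, ← this]
  push_cast; rfl

lemma summable_t (q : ℕ → ℕ) (hq : ∀ k, 2 ≤ q k) (ε : ℕ → ℕ) (hε : ∀ n, ε n < q n) :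
    Summable (fun n => ((-1 : ℝ) ^ (n + 1) * (ε n : ℝ)) / ∏ i ∈ Finset.range (n + 1), (q i : ℝ)) := by
  rw [← summable_abs_iff]
  have hle : ∀ n, |((-1 : ℝ) ^ (n + 1) * (ε n : ℝ)) / ∏ i ∈ Finset.range (n + 1), (q i : ℝ)|
      ≤ ((q (n+0) : ℝ) - 1) / (QQ q (n+0+1) : ℝ) := by
    intro n
    rw [prod_cast, abs_div, abs_mul, abs_pow, abs_neg, abs_one, one_pow, one_mul]
    have h0 : (0:ℝ) < (QQ q (n+1) : ℝ) := by exact_mod_cast QQ_pos q hq (n+1)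
    rw [abs_of_pos h0, Nat.abs_cast]
    simp only [Nat.add_zero]
    have hn : (ε n : ℝ) ≤ (q n : ℝ) - 1 := by
      have h := hε n
      have h2 : (ε n : ℝ) + 1 ≤ (q n : ℝ) := by exact_mod_cast h
      linarith
    gcongr
  exact Summable.of_nonneg_of_le (fun n => abs_nonneg _) hle ((tele_hasSum q hq 0).summable)


lemma divle {a b c : ℝ} (h : a ≤ b) (hc : 0 < c) : a/c ≤ b/c := by gcongr

lemma bounds (q : ℕ → ℕ) (hq : ∀ k, 2 ≤ q k) (ε : ℕ → ℕ) (hε : ∀ n, ε n < q n) (k : ℕ) :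
    -((AAx q k : ℝ)) - 1 < (∑' n, ((-1 : ℝ) ^ (n + 1) * (ε n : ℝ)) / ∏ i ∈ Finset.range (n + 1), (q i : ℝ)) * (QQ q k : ℝ)
    ∧ (∑' n, ((-1 : ℝ) ^ (n + 1) * (ε n : ℝ)) / ∏ i ∈ Finset.range (n + 1), (q i : ℝ)) * (QQ q k : ℝ) < (BBx q k : ℝ) + 1 := by
  set t : ℕ → ℝ := fun n => ((-1 : ℝ) ^ (n + 1) * (ε n : ℝ)) / ∏ i ∈ Finset.range (n + 1), (q i : ℝ) with ht
  have hQ : (0:ℝ) < (QQ q k : ℝ) := by exact_mod_cast QQ_pos q hq k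
  have hQn : ∀ m, (0:ℝ) < (QQ q m : ℝ) := fun m => by exact_mod_cast QQ_pos q hq m
  have hsumm : Summable t := summable_t q hq ε hε
  have hsplit : ∑ i ∈ Finset.range k, t i + ∑' i, t (i + k) = ∑' i, t i :=
    Summable.sum_add_tsum_nat_add k hsumm
  -- term formulas
  have htval : ∀ n, t n = (-1:ℝ)^(n+1) * (ε n : ℝ) / (QQ q (n+1) : ℝ) := by
    intro n; rw [ht]; simp only; rw [prod_cast]
  have hεle : ∀ n, (ε n : ℝ) ≤ (q n : ℝ) - 1 := by
    intro n
    have h2 : (ε n : ℝ) + 1 ≤ (q n : ℝ) := by exact_mod_cast hε n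
    linarith
  have hε0 : ∀ n, (0:ℝ) ≤ (ε n : ℝ) := fun n => Nat.cast_nonneg _
  -- head bounds
  have hBcast : (BBx q k : ℝ) = ∑ n ∈ Finset.range k,
      (if ¬ Even n then ((q n : ℝ) - 1) * ∏ j ∈ Finset.Ico (n+1) k, (q j : ℝ) else 0) := by
    rw [BBx]
    push_cast [apply_ite (fun z : ℤ => (z : ℝ))]
    rfl
  have hAcast : (AAx q k : ℝ) = ∑ n ∈ Finset.range k,
      (if Even n then ((q n : ℝ) - 1) * ∏ j ∈ Finset.Ico (n+1) k, (q j : ℝ) else 0) := by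
    rw [AAx]
    push_cast [apply_ite (fun z : ℤ => (z : ℝ))]
    rfl
  have hsign : ∀ n, Even n → ((-1:ℝ))^(n+1) = -1 := fun n hn => Odd.neg_one_pow (hn.add_one)
  have hsign' : ∀ n, ¬ Even n → ((-1:ℝ))^(n+1) = 1 := fun n hn =>
    Even.neg_one_pow ((Nat.not_even_iff_odd.1 hn).add_one)
  have hheadU : ∑ i ∈ Finset.range k, t i ≤ (BBx q k : ℝ) / (QQ q k : ℝ) := by
    rw [hBcast, Finset.sum_div]
    apply Finset.sum_le_sum
    intro n hn
    have hnk : n < k := Finset.mem_range.mp hn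
    rw [htval]
    by_cases he : Even n
    · rw [if_neg (by simpa using he), hsign n he]
      have : -1 * (ε n : ℝ) / (QQ q (n+1) : ℝ) ≤ 0 := by
        apply div_nonpos_of_nonpos_of_nonneg <;> [linarith [hε0 n]; positivity]
      simpa using this
    · rw [if_pos he, hsign' n he, QQ_factor q hnk, one_mul]
      have hP : (0:ℝ) < ∏ j ∈ Finset.Ico (n+1) k, (q j : ℝ) :=
        Finset.prod_pos (fun j _ => by have := hq j; positivity)
      rw [mul_div_mul_right _ _ hP.ne']
      exact divle (hεle n) (hQn (n+1))
  have hheadL : -((AAx q k : ℝ)) / (QQ q k : ℝ) ≤ ∑ i ∈ Finset.range k, t i := by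
    have key : ∑ n ∈ Finset.range k,
        (-(if Even n then ((q n : ℝ) - 1) * ∏ j ∈ Finset.Ico (n+1) k, (q j : ℝ) else 0) / (QQ q k : ℝ))
        = -((AAx q k : ℝ)) / (QQ q k : ℝ) := by
      rw [hAcast]
      simp only [neg_div, Finset.sum_neg_distrib, ← Finset.sum_div]
    rw [← key]
    apply Finset.sum_le_sum
    intro n hn
    have hnk : n < k := Finset.mem_range.mp hn
    rw [htval]
    by_cases he : Even n
    · rw [if_pos he, hsign n he, QQ_factor q hnk]
      have hP : (0:ℝ) < ∏ j ∈ Finset.Ico (n+1) k, (q j : ℝ) :=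
        Finset.prod_pos (fun j _ => by have := hq j; positivity)
      rw [neg_div, mul_div_mul_right _ _ hP.ne',
        show (-1:ℝ) * (ε n : ℝ) / (QQ q (n+1) : ℝ) = -((ε n : ℝ) / (QQ q (n+1) : ℝ)) by ring]
      exact neg_le_neg (divle (hεle n) (hQn (n+1)))
    · rw [if_neg he, hsign' n he, neg_zero, one_mul]
      have : (0:ℝ) ≤ (ε n : ℝ) / (QQ q (n+1) : ℝ) := by positivity
      simpa using this
  -- tail bounds
  set g : ℕ → ℝ := fun i => if ¬ Even (i+k) then ((q (i+k) : ℝ) - 1) / (QQ q (i+k+1) : ℝ) else 0 with hg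
  set g' : ℕ → ℝ := fun i => if Even (i+k) then ((q (i+k) : ℝ) - 1) / (QQ q (i+k+1) : ℝ) else 0 with hg'
  set h : ℕ → ℝ := fun i => ((q (i+k) : ℝ) - 1) / (QQ q (i+k+1) : ℝ) with hh
  have hh0 : ∀ i, 0 ≤ h i := by
    intro i
    have h2 : (1:ℝ) ≤ (q (i+k) : ℝ) := by have := hq (i+k); exact_mod_cast by omega
    have := hQn (i+k+1)
    apply div_nonneg <;> linarith
  have hhpos : ∀ i, 0 < h i := by
    intro i
    have h2 : (2:ℝ) ≤ (q (i+k) : ℝ) := by exact_mod_cast hq (i+k)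
    have := hQn (i+k+1)
    apply div_pos <;> linarith
  have hgle : ∀ i, g i ≤ h i := by
    intro i; rw [hg, hh]; dsimp only; split
    · exact le_refl _
    · exact hh0 i
  have hg'le : ∀ i, g' i ≤ h i := by
    intro i; rw [hg', hh]; dsimp only; split
    · exact le_refl _
    · exact hh0 i
  have hg0 : ∀ i, 0 ≤ g i := by
    intro i; rw [hg]; dsimp only; split
    · exact hh0 i
    · exact le_refl _
  have hg'0 : ∀ i, 0 ≤ g' i := by
    intro i; rw [hg']; dsimp only; split
    · exact hh0 i
    · exact le_refl _
  have hhsumm : Summable h := (tele_hasSum q hq k).summable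
  have hhsum : ∑' i, h i = 1 / (QQ q k : ℝ) := (tele_hasSum q hq k).tsum_eq
  have hgsumm : Summable g := Summable.of_nonneg_of_le hg0 hgle hhsumm
  have hg'summ : Summable g' := Summable.of_nonneg_of_le hg'0 hg'le hhsumm
  have htsumm : Summable (fun i => t (i + k)) := (summable_nat_add_iff k).mpr hsumm
  have htg : ∀ i, t (i + k) ≤ g i := by
    intro i
    rw [htval, hg]; dsimp only
    by_cases he : Even (i+k)
    · rw [if_neg (by simpa using he), hsign _ he]
      apply div_nonpos_of_nonpos_of_nonneg
      · linarith [hε0 (i+k)]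
      · exact (hQn _).le
    · rw [if_pos he, hsign' _ he, one_mul]
      exact divle (hεle (i+k)) (hQn _)
  have htg' : ∀ i, -(g' i) ≤ t (i + k) := by
    intro i
    rw [htval, hg']; dsimp only
    by_cases he : Even (i+k)
    · rw [if_pos he, hsign _ he]
      rw [show (-1:ℝ) * (ε (i+k) : ℝ) / (QQ q (i+k+1) : ℝ) = -((ε (i+k) : ℝ) / (QQ q (i+k+1) : ℝ)) by ring,
        neg_le_neg_iff]
      exact divle (hεle (i+k)) (hQn _)
    · rw [if_neg he, hsign' _ he, one_mul, neg_zero]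
      positivity
  -- a point where g vanishes but h is positive
  obtain ⟨i₀, hi₀⟩ : ∃ i₀, Even (i₀ + k) := by
    rcases Nat.even_or_odd k with hk | hk
    · exact ⟨0, by simpa using hk⟩
    · exact ⟨1, by rw [add_comm, Nat.even_add_one]; simpa using Nat.not_even_iff_odd.mpr hk⟩
  obtain ⟨i₁, hi₁⟩ : ∃ i₁, ¬ Even (i₁ + k) := by
    rcases Nat.even_or_odd k with hk | hk
    · exact ⟨1, by rw [add_comm, Nat.even_add_one]; simpa using hk⟩
    · exact ⟨0, by simpa using Nat.not_even_iff_odd.mpr hk⟩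
  have hglt : ∑' i, g i < 1 / (QQ q k : ℝ) := by
    rw [← hhsum]
    refine Summable.tsum_lt_tsum (i := i₀) hgle ?_ hgsumm hhsumm
    rw [hg]; dsimp only
    rw [if_neg (by simpa using hi₀)]
    exact hhpos i₀
  have hg'lt : ∑' i, g' i < 1 / (QQ q k : ℝ) := by
    rw [← hhsum]
    refine Summable.tsum_lt_tsum (i := i₁) hg'le ?_ hg'summ hhsumm
    rw [hg']; dsimp only
    rw [if_neg hi₁]
    exact hhpos i₁
  have htailU : ∑' i, t (i + k) < 1 / (QQ q k : ℝ) :=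
    lt_of_le_of_lt (Summable.tsum_le_tsum htg htsumm hgsumm) hglt
  have htailL : -(1 / (QQ q k : ℝ)) < ∑' i, t (i + k) := by
    have h1 : ∑' i, -(g' i) ≤ ∑' i, t (i + k) := Summable.tsum_le_tsum htg' hg'summ.neg htsumm
    have h2 : ∑' i, -(g' i) = -(∑' i, g' i) := by rw [tsum_neg]
    linarith
  -- combine
  have hxU : ∑' i, t i < (BBx q k : ℝ) / (QQ q k : ℝ) + 1 / (QQ q k : ℝ) := by
    rw [← hsplit]; linarith
  have hxL : -((AAx q k : ℝ)) / (QQ q k : ℝ) - 1 / (QQ q k : ℝ) < ∑' i, t i := by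
    rw [← hsplit]; linarith
  constructor
  · have := mul_lt_mul_of_pos_right hxL hQ
    rw [sub_mul, div_mul_cancel₀ _ hQ.ne', div_mul_cancel₀ _ hQ.ne'] at this
    linarith
  · have := mul_lt_mul_of_pos_right hxU hQ
    rw [add_mul, div_mul_cancel₀ _ hQ.ne', div_mul_cancel₀ _ hQ.ne'] at this
    linarith

lemma finite_sum_eq (q : ℕ → ℕ) (hq : ∀ k, 2 ≤ q k) (ε : ℕ → ℕ) (N : ℕ) :
    ∑ n ∈ Finset.range N, ((-1 : ℝ) ^ (n + 1) * (ε n : ℝ)) / ∏ i ∈ Finset.range (n + 1), (q i : ℝ)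
      = ((∑ n ∈ Finset.range N, (-1:ℤ)^(n+1) * (ε n : ℤ) * ∏ j ∈ Finset.Ico (n+1) N, (q j : ℤ) : ℤ) : ℝ)
        / (QQ q N : ℝ) := by
  push_cast
  rw [Finset.sum_div]
  apply Finset.sum_congr rfl
  intro n hn
  have hnk : n < N := Finset.mem_range.mp hn
  have hP : (0:ℝ) < ∏ j ∈ Finset.Ico (n+1) N, (q j : ℝ) :=
    Finset.prod_pos (fun j _ => by have := hq j; positivity)
  rw [prod_cast, QQ_factor q hnk, mul_div_mul_right _ _ hP.ne']

/-- (Serbenyuk) Suppose the rational number `x = p/r` (with `gcd(p,r)=1`,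
`r ≥ 1`) is representable by an alternating Cantor series
`x = ∑_{n=1}^∞ (−1)^n ε_n / (q_1 ⋯ q_n)`. Then `x` has a finite expansion by such a series
(digits eventually `0`) iff there is `n₀ ≥ 1` with `r ∣ q_1 q_2 ⋯ q_{n₀}`.
(Sequences are 0-indexed, so the sign of the term of index `n : ℕ` is `(−1)^{n+1}`.) -/
theorem alternating_cantor_finite_expansion_iff
    (q : ℕ → ℕ) (hq : ∀ k, 2 ≤ q k)
    (p : ℤ) (r : ℕ) (hr : 0 < r) (hpr : Int.gcd p (r : ℤ) = 1)
    (x : ℝ) (hx : x = (p : ℝ) / (r : ℝ))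
    (hrep : ∃ ε : ℕ → ℕ, (∀ n, ε n < q n) ∧
      x = ∑' n : ℕ, ((-1 : ℝ) ^ (n + 1) * (ε n : ℝ)) / ∏ i ∈ Finset.range (n + 1), (q i : ℝ)) :
    (∃ ε : ℕ → ℕ, (∀ n, ε n < q n) ∧ (∃ N : ℕ, ∀ n ≥ N, ε n = 0) ∧
      x = ∑' n : ℕ, ((-1 : ℝ) ^ (n + 1) * (ε n : ℝ)) / ∏ i ∈ Finset.range (n + 1), (q i : ℝ)) ↔
      ∃ n₀ : ℕ, 0 < n₀ ∧ r ∣ ∏ i ∈ Finset.range n₀, q i := by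
  have hrR : (0:ℝ) < (r:ℝ) := by exact_mod_cast hr
  constructor
  · rintro ⟨ε, hεlt, ⟨N, hN⟩, hxeq⟩
    have hts : ∑' n : ℕ, ((-1 : ℝ) ^ (n + 1) * (ε n : ℝ)) / ∏ i ∈ Finset.range (n + 1), (q i : ℝ)
        = ∑ n ∈ Finset.range N, ((-1 : ℝ) ^ (n + 1) * (ε n : ℝ)) / ∏ i ∈ Finset.range (n + 1), (q i : ℝ) := by
      apply tsum_eq_sum
      intro b hb
      have hb' : ε b = 0 := hN b (le_of_not_gt (by simpa using hb))
      simp [hb']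
    set S : ℤ := ∑ n ∈ Finset.range N, (-1:ℤ)^(n+1) * (ε n : ℤ) * ∏ j ∈ Finset.Ico (n+1) N, (q j : ℤ) with hS
    have hQN : (0:ℝ) < (QQ q N : ℝ) := by exact_mod_cast QQ_pos q hq N
    have hxS : x = (S:ℝ) / (QQ q N : ℝ) := by
      rw [hxeq, hts, finite_sum_eq q hq ε N]
    have hcross : (p:ℝ) * (QQ q N : ℝ) = (S:ℝ) * (r:ℝ) := by
      rw [hx] at hxS
      field_simp at hxS
      linarith [hxS]
    have hcrossZ : p * (QQ q N : ℤ) = S * (r : ℤ) := by exact_mod_cast hcross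
    have hdvd : (r:ℤ) ∣ (QQ q N : ℤ) * p := by
      exact ⟨S, by rw [mul_comm (QQ q N : ℤ) p, hcrossZ, mul_comm]⟩
    have hcop : Int.gcd (r:ℤ) p = 1 := by rw [Int.gcd_comm]; exact hpr
    have hdvd2 : (r:ℤ) ∣ (QQ q N : ℤ) :=
      (Int.isCoprime_iff_gcd_eq_one.mpr hcop).dvd_of_dvd_mul_right hdvd
    have hdvd3 : r ∣ QQ q N := by exact_mod_cast hdvd2
    refine ⟨N+1, Nat.succ_pos N, ?_⟩
    have : QQ q (N+1) = QQ q N * q N := Finset.prod_range_succ _ _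
    show r ∣ QQ q (N+1)
    rw [this]
    exact hdvd3.mul_right _
  · rintro ⟨n₀, hn₀, hdvd⟩
    obtain ⟨ε', hε'lt, hxeq⟩ := hrep
    set c : ℕ := QQ q n₀ / r with hc
    have hQrc : QQ q n₀ = r * c := (Nat.mul_div_cancel' hdvd).symm
    set v : ℤ := p * (c : ℤ) with hv
    have hQn₀ : (0:ℝ) < (QQ q n₀ : ℝ) := by exact_mod_cast QQ_pos q hq n₀
    have hvx : (v:ℝ) = x * (QQ q n₀ : ℝ) := by
      rw [hx]
      have : (QQ q n₀ : ℝ) = (r:ℝ) * (c:ℝ) := by exact_mod_cast congrArg (Nat.cast : ℕ → ℝ) hQrc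
      rw [this]
      field_simp
      rw [hv]
      push_cast
      ring
    obtain ⟨hb1, hb2⟩ := bounds q hq ε' hε'lt n₀
    rw [← hxeq] at hb1 hb2
    rw [← hvx] at hb1 hb2
    have hi1 : -(AAx q n₀) - 1 < v := by exact_mod_cast hb1
    have hi2 : v < BBx q n₀ + 1 := by exact_mod_cast hb2
    obtain ⟨ε, hεlt, hz, hsum⟩ := repInt q hq n₀ v (by omega) (by omega)
    refine ⟨ε, hεlt, ⟨n₀, fun n hn => hz n hn⟩, ?_⟩
    have hts : ∑' n : ℕ, ((-1 : ℝ) ^ (n + 1) * (ε n : ℝ)) / ∏ i ∈ Finset.range (n + 1), (q i : ℝ)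
        = ∑ n ∈ Finset.range n₀, ((-1 : ℝ) ^ (n + 1) * (ε n : ℝ)) / ∏ i ∈ Finset.range (n + 1), (q i : ℝ) := by
      apply tsum_eq_sum
      intro b hb
      have hb' : ε b = 0 := hz b (by simpa using hb)
      simp [hb']
    rw [hts, finite_sum_eq q hq ε n₀, ← hsum, hvx, mul_div_cancel_right₀ _ hQn₀.ne']
end

section
/- Let x be given by an alternating Cantor series representation x = ∑_{n=1}^∞ (−1)^n ε_n/(q_1 q_2 ⋯ q_n). Then x is a rational number if and only if there exist integers k and t with 0 ≤ k < t such that φ̂^k(x) = φ̂^t(x), where φ̂^k(x) = ∑_{n=k+1}^∞ (−1)^{n−k} ε_n/(q_{k+1} q_{k+2} ⋯ q_n). -/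
open Finset Filter

/-- The shift `φ̂^k(x)` of the alternating Cantor series. -/
noncomputable def acS (q ε : ℕ → ℕ) (k : ℕ) : ℝ :=
  ∑' j : ℕ, ((-1 : ℝ) ^ (j + 1) * (ε (k + j) : ℝ)) / ∏ i ∈ Finset.Ico k (k + j + 1), (q i : ℝ)

lemma acProd_pos (q : ℕ → ℕ) (hq : ∀ k, 2 ≤ q k) (a b : ℕ) :
    0 < ∏ i ∈ Finset.Ico a b, (q i : ℝ) := by
  apply Finset.prod_pos
  intro i _
  have := hq i
  exact_mod_cast Nat.lt_of_lt_of_le (by norm_num) this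

lemma acProd_ge (q : ℕ → ℕ) (hq : ∀ k, 2 ≤ q k) (a j : ℕ) :
    (2 : ℝ) ^ j ≤ ∏ i ∈ Finset.Ico a (a + j), (q i : ℝ) := by
  have hcard : (Finset.Ico a (a + j)).card = j := by rw [Nat.card_Ico]; omega
  calc (2 : ℝ) ^ j = ∏ _i ∈ Finset.Ico a (a + j), (2 : ℝ) := by
        rw [Finset.prod_const, hcard]
    _ ≤ ∏ i ∈ Finset.Ico a (a + j), (q i : ℝ) := by
        apply Finset.prod_le_prod (fun _ _ => by norm_num)
        intro i _
        exact_mod_cast hq i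

lemma acTerm_abs (q ε : ℕ → ℕ) (hq : ∀ k, 2 ≤ q k) (hε : ∀ k, ε k < q k) (k j : ℕ) :
    |((-1 : ℝ) ^ (j + 1) * (ε (k + j) : ℝ)) / ∏ i ∈ Finset.Ico k (k + j + 1), (q i : ℝ)|
      ≤ (1 / 2 : ℝ) ^ j := by
  have hP' : (2 : ℝ) ^ j ≤ ∏ i ∈ Finset.Ico k (k + j), (q i : ℝ) := acProd_ge q hq k j
  have hP'pos : 0 < ∏ i ∈ Finset.Ico k (k + j), (q i : ℝ) := acProd_pos q hq k (k + j)
  have hqpos : (0 : ℝ) < q (k + j) := by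
    have := hq (k + j); exact_mod_cast Nat.lt_of_lt_of_le (by norm_num) this
  have hsplit : ∏ i ∈ Finset.Ico k (k + j + 1), (q i : ℝ)
      = (∏ i ∈ Finset.Ico k (k + j), (q i : ℝ)) * (q (k + j) : ℝ) :=
    Finset.prod_Ico_succ_top (Nat.le_add_right _ _) _
  rw [abs_div, abs_mul, abs_pow, abs_neg, abs_one, one_pow, one_mul, hsplit,
    abs_of_pos (mul_pos hP'pos hqpos), Nat.abs_cast]
  have h1 : (ε (k + j) : ℝ) ≤ (q (k + j) : ℝ) := by exact_mod_cast (hε (k + j)).le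
  rw [div_le_iff₀ (by positivity)]
  have h2 : (1 / 2 : ℝ) ^ j * (2 : ℝ) ^ j = 1 := by
    rw [← mul_pow]; norm_num
  calc (ε (k + j) : ℝ) ≤ (q (k + j) : ℝ) * ((1 / 2 : ℝ) ^ j * (2 : ℝ) ^ j) := by
        rw [h2]; linarith
    _ = (1 / 2 : ℝ) ^ j * ((2:ℝ)^j * (q (k + j) : ℝ)) := by ring
    _ ≤ (1 / 2 : ℝ) ^ j * ((∏ i ∈ Finset.Ico k (k + j), (q i : ℝ)) * (q (k + j) : ℝ)) := by
        apply mul_le_mul_of_nonneg_left _ (by positivity)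
        exact mul_le_mul_of_nonneg_right hP' hqpos.le

lemma acSummable (q ε : ℕ → ℕ) (hq : ∀ k, 2 ≤ q k) (hε : ∀ k, ε k < q k) (k : ℕ) :
    Summable (fun j : ℕ => ((-1 : ℝ) ^ (j + 1) * (ε (k + j) : ℝ)) /
      ∏ i ∈ Finset.Ico k (k + j + 1), (q i : ℝ)) :=
  Summable.of_norm_bounded
    (summable_geometric_of_lt_one (r := (1 / 2 : ℝ)) (by norm_num) (by norm_num))
    fun j => by rw [Real.norm_eq_abs]; exact acTerm_abs q ε hq hε k j

lemma acS_abs_le (q ε : ℕ → ℕ) (hq : ∀ k, 2 ≤ q k) (hε : ∀ k, ε k < q k) (k : ℕ) :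
    |acS q ε k| ≤ 2 := by
  have hgeom : Summable (fun j : ℕ => (1 / 2 : ℝ) ^ j) :=
    summable_geometric_of_lt_one (by norm_num) (by norm_num)
  have habs : Summable (fun j : ℕ => ‖((-1 : ℝ) ^ (j + 1) * (ε (k + j) : ℝ)) /
      ∏ i ∈ Finset.Ico k (k + j + 1), (q i : ℝ)‖) := by
    apply Summable.of_nonneg_of_le (fun _ => norm_nonneg _) _ hgeom
    intro j; rw [Real.norm_eq_abs]; exact acTerm_abs q ε hq hε k j
  calc |acS q ε k| ≤ ∑' j : ℕ, ‖((-1 : ℝ) ^ (j + 1) * (ε (k + j) : ℝ)) /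
        ∏ i ∈ Finset.Ico k (k + j + 1), (q i : ℝ)‖ := norm_tsum_le_tsum_norm habs
    _ ≤ ∑' j : ℕ, (1 / 2 : ℝ) ^ j := by
        apply Summable.tsum_le_tsum _ habs hgeom
        intro j; rw [Real.norm_eq_abs]; exact acTerm_abs q ε hq hε k j
    _ = 2 := by rw [tsum_geometric_of_lt_one (by norm_num) (by norm_num)]; norm_num

lemma acS_rec (q ε : ℕ → ℕ) (hq : ∀ k, 2 ≤ q k) (hε : ∀ k, ε k < q k) (k : ℕ) :
    (q k : ℝ) * acS q ε k = -(ε k : ℝ) - acS q ε (k + 1) := by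
  have hq0 : (q k : ℝ) ≠ 0 := by
    have := hq k; positivity
  have hterm : ∀ j : ℕ,
      ((-1 : ℝ) ^ (j + 1 + 1) * (ε (k + (j + 1)) : ℝ)) /
          ∏ i ∈ Finset.Ico k (k + (j + 1) + 1), (q i : ℝ)
        = -(q k : ℝ)⁻¹ * (((-1 : ℝ) ^ (j + 1) * (ε ((k + 1) + j) : ℝ)) /
          ∏ i ∈ Finset.Ico (k + 1) ((k + 1) + j + 1), (q i : ℝ)) := by
    intro j
    have hk : k < k + (j + 1) + 1 := by omega
    rw [Finset.prod_eq_prod_Ico_succ_bot hk]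
    have he : k + (j + 1) = k + 1 + j := by omega
    rw [he]
    ring
  have hmain : acS q ε k = -(ε k : ℝ) / (q k : ℝ) + (-(q k : ℝ)⁻¹) * acS q ε (k + 1) := by
    rw [acS, Summable.tsum_eq_zero_add (acSummable q ε hq hε k)]
    congr 1
    · simp [Nat.Ico_succ_singleton]
    · rw [tsum_congr hterm, tsum_mul_left]
      rfl
  rw [hmain]
  field_simp
  ring

lemma acS_succ (q ε : ℕ → ℕ) (hq : ∀ k, 2 ≤ q k) (hε : ∀ k, ε k < q k) (n : ℕ) :
    acS q ε (n + 1) = -(ε n : ℝ) - (q n : ℝ) * acS q ε n := by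
  have := acS_rec q ε hq hε n
  linarith

lemma acS_affine (q ε : ℕ → ℕ) (hq : ∀ k, 2 ≤ q k) (hε : ∀ k, ε k < q k) (k : ℕ) :
    ∀ m : ℕ, ∃ a b : ℚ, (2 : ℚ) ^ m ≤ |b| ∧ acS q ε (k + m) = (a : ℝ) + (b : ℝ) * acS q ε k := by
  intro m
  induction m with
  | zero => exact ⟨0, 1, by norm_num, by simp⟩
  | succ m ih =>
    obtain ⟨a, b, hb, hab⟩ := ih
    refine ⟨-(ε (k + m) : ℚ) - (q (k + m) : ℚ) * a, -(q (k + m) : ℚ) * b, ?_, ?_⟩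
    · rw [abs_mul, abs_neg, Nat.abs_cast, pow_succ, mul_comm]
      have h2 : (2 : ℚ) ≤ (q (k + m) : ℚ) := by exact_mod_cast hq (k + m)
      have hb0 : (0 : ℚ) ≤ |b| := abs_nonneg b
      nlinarith
    · have : k + (m + 1) = (k + m) + 1 := by omega
      rw [this, acS_succ q ε hq hε (k + m), hab]
      push_cast
      ring

lemma acRat_down (q ε : ℕ → ℕ) (hq : ∀ k, 2 ≤ q k) (hε : ∀ k, ε k < q k) (n : ℕ) :
    (∃ r : ℚ, acS q ε (n + 1) = (r : ℝ)) → ∃ r : ℚ, acS q ε n = (r : ℝ) := by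
  rintro ⟨r, hr⟩
  have hq0 : (q n : ℝ) ≠ 0 := by have := hq n; positivity
  refine ⟨(-(ε n : ℚ) - r) / (q n : ℚ), ?_⟩
  have hrec := acS_rec q ε hq hε n
  rw [hr] at hrec
  push_cast
  rw [eq_div_iff hq0]
  linarith

/-- (Serbenyuk) A number `x` represented by an alternating Cantor series
`x = ∑_{n=1}^∞ (−1)^n ε_n / (q_1 ⋯ q_n)` is rational iff there exist `0 ≤ k < t` with
`φ̂^k(x) = φ̂^t(x)`, where `φ̂^k(x) = ∑_{n=k+1}^∞ (−1)^{n−k} ε_n / (q_{k+1} ⋯ q_n)`.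
(Sequences are 0-indexed: with `n = k + 1 + j`, the sign `(−1)^{n−k}` becomes `(−1)^{j+1}`.) -/
theorem alternating_cantor_rational_iff_shift_eq
    (q ε : ℕ → ℕ) (hq : ∀ k, 2 ≤ q k) (hε : ∀ k, ε k < q k)
    (x : ℝ)
    (hx : x = ∑' n : ℕ, ((-1 : ℝ) ^ (n + 1) * (ε n : ℝ)) / ∏ i ∈ Finset.range (n + 1), (q i : ℝ)) :
    (∃ r : ℚ, x = (r : ℝ)) ↔
      ∃ k t : ℕ, k < t ∧
        (∑' j : ℕ, ((-1 : ℝ) ^ (j + 1) * (ε (k + j) : ℝ)) /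
            ∏ i ∈ Finset.Ico k (k + j + 1), (q i : ℝ)) =
        (∑' j : ℕ, ((-1 : ℝ) ^ (j + 1) * (ε (t + j) : ℝ)) /
            ∏ i ∈ Finset.Ico t (t + j + 1), (q i : ℝ)) := by
  have hxS : x = acS q ε 0 := by
    rw [hx, acS]
    exact tsum_congr fun n => by rw [Finset.range_eq_Ico]; norm_num
  constructor
  · rintro ⟨r, hr⟩
    set d : ℕ := r.den with hd
    have hdpos : 0 < d := r.pos
    have hdR : (d : ℝ) ≠ 0 := by positivity
    have hz : ∀ n : ℕ, ∃ z : ℤ, acS q ε n = (z : ℝ) / (d : ℝ) := by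
      intro n
      induction n with
      | zero =>
        refine ⟨r.num, ?_⟩
        rw [← hxS, hr, Rat.cast_def, hd]
      | succ n ih =>
        obtain ⟨z, hzn⟩ := ih
        refine ⟨-(ε n : ℤ) * d - (q n : ℤ) * z, ?_⟩
        rw [acS_succ q ε hq hε n, hzn]
        push_cast
        field_simp
    choose z hzeq using hz
    have hbz : ∀ n, z n ∈ Finset.Icc (-(2 * (d : ℤ))) (2 * d) := by
      intro n
      have h2 := acS_abs_le q ε hq hε n
      rw [hzeq n, abs_div, abs_of_pos (by positivity : (0:ℝ) < (d:ℝ)),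
        div_le_iff₀ (by positivity)] at h2
      rw [Finset.mem_Icc]
      have : |(z n : ℝ)| ≤ 2 * (d : ℝ) := h2
      have h3 : |z n| ≤ 2 * (d : ℤ) := by exact_mod_cast (by push_cast at this ⊢; exact this : |(z n : ℝ)| ≤ ((2 * (d:ℤ) : ℤ) : ℝ))
      constructor <;> [linarith [neg_abs_le (z n)]; linarith [le_abs_self (z n)]]
    obtain ⟨a, b, hab, heq⟩ := Finite.exists_ne_map_eq_of_infinite
      (fun n : ℕ => (⟨z n, hbz n⟩ : (Finset.Icc (-(2 * (d : ℤ))) (2 * d) : Finset ℤ)))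
    have hzab : z a = z b := by simpa using congrArg Subtype.val heq
    have hS : acS q ε a = acS q ε b := by rw [hzeq a, hzeq b, hzab]
    rcases hab.lt_or_gt with h | h
    · exact ⟨a, b, h, hS⟩
    · exact ⟨b, a, h, hS.symm⟩
  · rintro ⟨k, t, hkt, hS'⟩
    have hS : acS q ε k = acS q ε t := hS'
    obtain ⟨a, b, hb, hab⟩ := acS_affine q ε hq hε k (t - k)
    rw [show k + (t - k) = t from by omega] at hab
    have hb2 : (2 : ℚ) ≤ |b| := le_trans (by
      calc (2:ℚ) = 2 ^ 1 := (pow_one 2).symm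
        _ ≤ 2 ^ (t - k) := pow_le_pow_right₀ (by norm_num) (by omega)) hb
    have hb1 : b ≠ 1 := by
      intro h; rw [h] at hb2; norm_num at hb2
    have h1b : (1 : ℝ) - (b : ℝ) ≠ 0 := by
      intro h
      apply hb1
      have : (b : ℝ) = ((1 : ℚ) : ℝ) := by push_cast; linarith
      exact_mod_cast this
    have hSk : acS q ε k = ((a / (1 - b) : ℚ) : ℝ) := by
      have h2 : acS q ε k = (a : ℝ) + (b : ℝ) * acS q ε k := hS.trans hab
      push_cast
      rw [eq_div_iff h1b]
      linarith
    have hdown : ∀ j : ℕ, ∃ r : ℚ, acS q ε (k - j) = (r : ℝ) := by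
      intro j
      induction j with
      | zero => exact ⟨_, hSk⟩
      | succ j ih =>
        rcases Nat.lt_or_ge j k with h | h
        · have he : k - j = (k - (j + 1)) + 1 := by omega
          exact acRat_down q ε hq hε (k - (j + 1)) (he ▸ ih)
        · have he : k - (j + 1) = k - j := by omega
          rw [he]; exact ih
    obtain ⟨r0, hr0⟩ := hdown k
    refine ⟨r0, ?_⟩
    rw [hxS, ← Nat.sub_self k]
    exact hr0
end

section
/- Let x be given by an alternating Cantor series representation x = ∑_{n=1}^∞ (−1)^n ε_n/(q_1 q_2 ⋯ q_n). Then x is a rational number if and only if there exist integers k and t with 0 ≤ k < t such that ∑_{n=k+1}^∞ (−1)^n ε_n/(q_1 q_2 ⋯ q_n) = (−1)^{t−k} q_{k+1} q_{k+2} ⋯ q_t · ∑_{n=t+1}^∞ (−1)^n ε_n/(q_1 q_2 ⋯ q_n). -/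
open Finset Filter

namespace AltCantor


noncomputable def P (q : ℕ → ℕ) (n : ℕ) : ℝ := ∏ i ∈ Finset.range n, (q i : ℝ)

noncomputable def f (q ε : ℕ → ℕ) (n j : ℕ) : ℝ :=
  ((-1 : ℝ) ^ (n + j + 1) * (ε (n + j) : ℝ)) / ∏ i ∈ Finset.range (n + j + 1), (q i : ℝ)

noncomputable def T (q ε : ℕ → ℕ) (n : ℕ) : ℝ := ∑' j, f q ε n j

noncomputable def V (q ε : ℕ → ℕ) (n : ℕ) : ℝ := (-1 : ℝ) ^ n * P q n * T q ε n

lemma P_pos (q : ℕ → ℕ) (hq : ∀ k, 2 ≤ q k) (n : ℕ) : 0 < P q n := by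
  apply Finset.prod_pos
  intro i _
  have := hq i
  positivity

lemma P_succ (q : ℕ → ℕ) (n : ℕ) : P q (n + 1) = P q n * q n := Finset.prod_range_succ _ _

lemma key_nat (q ε : ℕ → ℕ) (hq : ∀ k, 2 ≤ q k) (hε : ∀ k, ε k < q k) (n j : ℕ) :
    ε (n + j) * 2 ^ j ≤ ∏ i ∈ Finset.Ico n (n + j + 1), q i := by
  have h1 : 2 ^ j ≤ ∏ i ∈ Finset.Ico n (n + j), q i := by
    calc 2 ^ j = ∏ _i ∈ Finset.Ico n (n + j), 2 := by
          rw [Finset.prod_const, Nat.card_Ico]; congr 1; omega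
    _ ≤ ∏ i ∈ Finset.Ico n (n + j), q i := Finset.prod_le_prod' (fun i _ => hq i)
  rw [Finset.prod_Ico_succ_top (by omega)]
  calc ε (n + j) * 2 ^ j ≤ 2 ^ j * q (n + j) := by
        rw [mul_comm]; exact Nat.mul_le_mul_left _ (le_of_lt (hε _))
  _ ≤ (∏ i ∈ Finset.Ico n (n + j), q i) * q (n + j) :=
      Nat.mul_le_mul_right _ h1

lemma norm_f_le (q ε : ℕ → ℕ) (hq : ∀ k, 2 ≤ q k) (hε : ∀ k, ε k < q k) (n j : ℕ) :
    ‖f q ε n j‖ ≤ (1 / 2) ^ j / P q n := by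
  have hPn := P_pos q hq n
  have hPfull := P_pos q hq (n + j + 1)
  have hsplit : P q (n + j + 1) = P q n * ∏ i ∈ Finset.Ico n (n + j + 1), (q i : ℝ) := by
    rw [P, P, ← Finset.prod_range_mul_prod_Ico _ (by omega : n ≤ n + j + 1)]
  have hnorm : ‖f q ε n j‖ = (ε (n + j) : ℝ) / P q (n + j + 1) := by
    rw [f, norm_div, norm_mul, norm_pow, norm_neg, norm_one, one_pow, one_mul]
    rw [Real.norm_natCast]
    show (ε (n + j) : ℝ) / ‖P q (n + j + 1)‖ = _
    rw [Real.norm_of_nonneg hPfull.le]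
  rw [hnorm, div_le_div_iff₀ hPfull hPn, hsplit]
  have hkey := key_nat q ε hq hε n j
  have hkeyR : (ε (n + j) : ℝ) * 2 ^ j ≤ ∏ i ∈ Finset.Ico n (n + j + 1), (q i : ℝ) := by
    have := (Nat.cast_le (α := ℝ)).2 hkey
    push_cast at this ⊢
    linarith
  have h2 : (0:ℝ) < 2 ^ j := by positivity
  rw [one_div, inv_pow, inv_mul_eq_div, le_div_iff₀ h2]
  nlinarith [mul_le_mul_of_nonneg_right hkeyR hPn.le]

lemma summable_norm_f (q ε : ℕ → ℕ) (hq : ∀ k, 2 ≤ q k) (hε : ∀ k, ε k < q k) (n : ℕ) :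
    Summable (fun j => ‖f q ε n j‖) := by
  apply Summable.of_nonneg_of_le (fun j => norm_nonneg _) (norm_f_le q ε hq hε n)
  apply Summable.div_const
  exact summable_geometric_of_lt_one (by norm_num) (by norm_num)

lemma summable_f (q ε : ℕ → ℕ) (hq : ∀ k, 2 ≤ q k) (hε : ∀ k, ε k < q k) (n : ℕ) :
    Summable (f q ε n) :=
  (summable_norm_f q ε hq hε n).of_norm

lemma T_rec (q ε : ℕ → ℕ) (hq : ∀ k, 2 ≤ q k) (hε : ∀ k, ε k < q k) (n : ℕ) :
    T q ε n = (-1 : ℝ) ^ (n + 1) * (ε n : ℝ) / P q (n + 1) + T q ε (n + 1) := by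
  rw [T, Summable.tsum_eq_zero_add (summable_f q ε hq hε n)]
  have h0 : f q ε n 0 = (-1 : ℝ) ^ (n + 1) * (ε n : ℝ) / P q (n + 1) := by simp [f, P]
  have h1 : ∑' j : ℕ, f q ε n (j + 1) = T q ε (n + 1) := by
    rw [T]
    exact tsum_congr fun j => by
      have h : n + (j + 1) = (n + 1) + j := by omega
      simp [f, h]
  rw [h0, h1]

lemma V_rec (q ε : ℕ → ℕ) (hq : ∀ k, 2 ≤ q k) (hε : ∀ k, ε k < q k) (n : ℕ) :
    V q ε (n + 1) = -(ε n : ℝ) - q n * V q ε n := by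
  have hP : P q (n + 1) ≠ 0 := (P_pos q hq (n + 1)).ne'
  have hT := T_rec q ε hq hε n
  have hPn : P q n ≠ 0 := (P_pos q hq n).ne'
  have hq0 : (q n : ℝ) ≠ 0 := by
    have := hq n; positivity
  rw [V, V, hT, P_succ q n]
  rcases Nat.even_or_odd n with h | h
  · rw [h.neg_one_pow, h.add_one.neg_one_pow]
    field_simp
    ring
  · rw [h.neg_one_pow, h.add_one.neg_one_pow]
    field_simp
    ring

lemma V_bound (q ε : ℕ → ℕ) (hq : ∀ k, 2 ≤ q k) (hε : ∀ k, ε k < q k) (n : ℕ) :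
    |V q ε n| ≤ 2 := by
  have hPn := P_pos q hq n
  have h1 : ‖T q ε n‖ ≤ ∑' j, ‖f q ε n j‖ := norm_tsum_le_tsum_norm (summable_norm_f q ε hq hε n)
  have h2 : ∑' j, ‖f q ε n j‖ ≤ ∑' j : ℕ, (1/2 : ℝ) ^ j / P q n := by
    apply Summable.tsum_le_tsum (norm_f_le q ε hq hε n) (summable_norm_f q ε hq hε n)
    apply Summable.div_const
    exact summable_geometric_of_lt_one (by norm_num) (by norm_num)
  have h3 : ∑' j : ℕ, (1/2 : ℝ) ^ j / P q n = 2 / P q n := by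
    rw [tsum_div_const, tsum_geometric_of_lt_one (by norm_num) (by norm_num)]
    norm_num
  have : |V q ε n| = P q n * |T q ε n| := by
    rw [V, abs_mul, abs_mul, abs_pow, abs_neg, abs_one, one_pow, one_mul,
      abs_of_pos hPn]
  rw [this]
  have h4 : |T q ε n| ≤ 2 / P q n := by
    rw [← Real.norm_eq_abs]; linarith
  calc P q n * |T q ε n| ≤ P q n * (2 / P q n) := by
        exact mul_le_mul_of_nonneg_left h4 hPn.le
  _ = 2 := by field_simp

lemma eq_iff (q ε : ℕ → ℕ) (hq : ∀ k, 2 ≤ q k) (hε : ∀ k, ε k < q k) (k t : ℕ) (hkt : k < t) :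
    (T q ε k = (-1 : ℝ) ^ (t - k) * (∏ i ∈ Finset.Ico k t, (q i : ℝ)) * T q ε t)
      ↔ V q ε k = V q ε t := by
  have hPk := P_pos q hq k
  have hc : ((-1 : ℝ) ^ k * P q k) ≠ 0 := by
    apply mul_ne_zero
    · exact pow_ne_zero _ (by norm_num)
    · exact hPk.ne'
  have hsign : ((-1 : ℝ)) ^ t = (-1) ^ k * (-1) ^ (t - k) := by
    rw [← pow_add]; congr 1; omega
  have hprod : P q t = P q k * ∏ i ∈ Finset.Ico k t, (q i : ℝ) := by
    rw [P, P, ← Finset.prod_range_mul_prod_Ico _ hkt.le]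
  constructor
  · intro h
    rw [V, V, h, hsign, hprod]; ring
  · intro h
    rw [V, V, hsign, hprod] at h
    apply mul_left_cancel₀ hc
    calc (-1:ℝ)^k * P q k * T q ε k = (-1:ℝ)^k * P q k * T q ε k := rfl
    _ = (-1)^k * (-1)^(t-k) * (P q k * ∏ i ∈ Finset.Ico k t, (q i : ℝ)) * T q ε t := h
    _ = (-1:ℝ)^k * P q k * ((-1)^(t-k) * (∏ i ∈ Finset.Ico k t, (q i : ℝ)) * T q ε t) := by ring

lemma affine (q ε : ℕ → ℕ) (hq : ∀ k, 2 ≤ q k) (hε : ∀ k, ε k < q k) (k : ℕ) :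
    ∀ m, ∃ B : ℤ, V q ε (k + m) =
      ((((-1 : ℤ) ^ m * ∏ i ∈ Finset.Ico k (k + m), (q i : ℤ)) : ℤ) : ℝ) * V q ε k + (B : ℝ) := by
  intro m
  induction m with
  | zero => exact ⟨0, by simp⟩
  | succ m ih =>
    obtain ⟨B, hB⟩ := ih
    refine ⟨-(ε (k + m) : ℤ) - (q (k + m) : ℤ) * B, ?_⟩
    have h1 : k + (m + 1) = (k + m) + 1 := rfl
    rw [h1, V_rec q ε hq hε (k + m), hB,
      Finset.prod_Ico_succ_top (Nat.le_add_right k m)]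
    push_cast
    ring

lemma descend (q ε : ℕ → ℕ) (hq : ∀ k, 2 ≤ q k) (hε : ∀ k, ε k < q k) :
    ∀ n, (∃ s : ℚ, V q ε n = (s : ℝ)) → ∃ s : ℚ, V q ε 0 = (s : ℝ) := by
  intro n
  induction n with
  | zero => exact id
  | succ n ih =>
    rintro ⟨s, hs⟩
    apply ih
    have hq0 : (q n : ℝ) ≠ 0 := by have := hq n; positivity
    refine ⟨(-(ε n : ℚ) - s) / (q n : ℚ), ?_⟩
    have h := V_rec q ε hq hε n
    rw [hs] at h
    have h2 : V q ε n = (-(ε n : ℝ) - (s : ℝ)) / (q n : ℝ) := by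
      rw [eq_div_iff hq0]; linarith [h]
    rw [h2]
    push_cast
    ring

lemma prod_ge_two (q : ℕ → ℕ) (hq : ∀ k, 2 ≤ q k) (k t : ℕ) (hkt : k < t) :
    2 ≤ ∏ i ∈ Finset.Ico k t, q i := by
  calc 2 ≤ q k := hq k
  _ ≤ ∏ i ∈ Finset.Ico k t, q i :=
      Finset.single_le_prod' (fun i _ => by have := hq i; omega) (Finset.mem_Ico.2 ⟨le_refl k, hkt⟩)

end AltCantor

open AltCantor in
/-- (Serbenyuk) A number `x` represented by an alternating Cantor series
`x = ∑_{n=1}^∞ (−1)^n ε_n / (q_1 ⋯ q_n)` is rational iff there exist `0 ≤ k < t` with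
`∑_{n=k+1}^∞ (−1)^n ε_n/(q_1⋯q_n) = (−1)^{t−k} q_{k+1} ⋯ q_t ⬝ ∑_{n=t+1}^∞ (−1)^n ε_n/(q_1⋯q_n)`.
(Sequences are 0-indexed, so the paper's term of index `n` carries the sign `(−1)^{n}` with
`n = k + 1 + j`, i.e. `(−1)^{k+j+1}`.) -/
theorem alternating_cantor_rational_iff_tail_eq
    (q ε : ℕ → ℕ) (hq : ∀ k, 2 ≤ q k) (hε : ∀ k, ε k < q k)
    (x : ℝ)
    (hx : x = ∑' n : ℕ, ((-1 : ℝ) ^ (n + 1) * (ε n : ℝ)) / ∏ i ∈ Finset.range (n + 1), (q i : ℝ)) :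
    (∃ r : ℚ, x = (r : ℝ)) ↔
      ∃ k t : ℕ, k < t ∧
        (∑' j : ℕ, ((-1 : ℝ) ^ (k + j + 1) * (ε (k + j) : ℝ)) /
            ∏ i ∈ Finset.range (k + j + 1), (q i : ℝ)) =
        (-1 : ℝ) ^ (t - k) * (∏ i ∈ Finset.Ico k t, (q i : ℝ)) *
          (∑' j : ℕ, ((-1 : ℝ) ^ (t + j + 1) * (ε (t + j) : ℝ)) /
            ∏ i ∈ Finset.range (t + j + 1), (q i : ℝ)) := by
  have hTs : ∀ k : ℕ, (∑' j : ℕ, ((-1 : ℝ) ^ (k + j + 1) * (ε (k + j) : ℝ)) /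
      ∏ i ∈ Finset.range (k + j + 1), (q i : ℝ)) = T q ε k := fun k => rfl
  have hV0 : V q ε 0 = x := by
    rw [V, P, hx]
    simp only [Finset.range_zero, Finset.prod_empty, pow_zero, one_mul, T]
    exact tsum_congr fun n => by simp [f]
  constructor
  · rintro ⟨r, hr⟩
    set d : ℕ := r.den with hd
    have hd0 : (d : ℚ) ≠ 0 := by
      simp [hd, r.den_nz]
    -- the rational values of V
    let w : ℕ → ℚ := fun n => Nat.rec r (fun m wm => -(ε m : ℚ) - (q m : ℚ) * wm) n
    have hw : ∀ n, V q ε n = (Rat.cast (w n) : ℝ) := by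
      intro n
      induction n with
      | zero => rw [hV0, hr]; rfl
      | succ n ih =>
        rw [V_rec q ε hq hε n, ih]
        show _ = ((-(ε n : ℚ) - (q n : ℚ) * w n : ℚ) : ℝ)
        push_cast
        ring
    have hzn : ∀ n, ∃ z : ℤ, w n = (z : ℚ) / (d : ℚ) := by
      intro n
      induction n with
      | zero => exact ⟨r.num, (Rat.num_div_den r).symm⟩
      | succ n ih =>
        obtain ⟨z, hz⟩ := ih
        refine ⟨-(ε n : ℤ) * (d : ℤ) - (q n : ℤ) * z, ?_⟩
        show -(ε n : ℚ) - (q n : ℚ) * w n = _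
        rw [hz]
        field_simp
        push_cast; ring
    choose z hz using hzn
    have hzb : ∀ n, z n ∈ Set.Icc (-(2 * (d : ℤ))) (2 * (d : ℤ)) := by
      intro n
      have hb : |(Rat.cast (w n) : ℝ)| ≤ 2 := by rw [← hw n]; exact V_bound q ε hq hε n
      have hbq : |w n| ≤ 2 := by
        have : |(Rat.cast (w n) : ℝ)| = (Rat.cast |w n| : ℝ) := by push_cast; rfl
        rw [this] at hb
        exact_mod_cast hb
      have hdz : (0 : ℚ) < (d : ℚ) := by
        have : 0 < d := r.pos
        exact_mod_cast this
      have : |(z n : ℚ)| ≤ 2 * (d : ℚ) := by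
        have h1 : (z n : ℚ) = w n * d := by rw [hz n]; field_simp
        rw [h1, abs_mul, abs_of_pos hdz]
        exact mul_le_mul_of_nonneg_right hbq hdz.le
      constructor
      · have := (abs_le.mp this).1
        exact_mod_cast (by push_cast at this ⊢; linarith : ((-(2 * (d:ℤ)) : ℤ) : ℚ) ≤ (z n : ℚ))
      · have := (abs_le.mp this).2
        exact_mod_cast (by push_cast at this ⊢; linarith : ((z n : ℚ)) ≤ ((2 * (d:ℤ) : ℤ) : ℚ))
    obtain ⟨a, -, b, -, hab, hzab⟩ :=
      Set.infinite_univ.exists_ne_map_eq_of_mapsTo (f := z)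
        (fun n _ => hzb n) (Set.finite_Icc _ _)
    have hVab : ∀ a b : ℕ, z a = z b → V q ε a = V q ε b := by
      intro a b h
      rw [hw a, hw b, hz a, hz b, h]
    rcases hab.lt_or_gt with h | h
    · exact ⟨a, b, h, by rw [hTs a, hTs b]; exact (eq_iff q ε hq hε a b h).2 (hVab a b hzab)⟩
    · exact ⟨b, a, h, by rw [hTs a, hTs b]; exact (eq_iff q ε hq hε b a h).2 (hVab b a hzab.symm)⟩
  · rintro ⟨k, t, hkt, heq⟩
    rw [hTs k, hTs t] at heq
    have hVkt : V q ε k = V q ε t := (eq_iff q ε hq hε k t hkt).1 heq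
    obtain ⟨B, hB⟩ := affine q ε hq hε k (t - k)
    rw [show k + (t - k) = t from by omega] at hB
    set A : ℤ := (-1 : ℤ) ^ (t - k) * ∏ i ∈ Finset.Ico k t, (q i : ℤ) with hA
    have hprodZ : (2 : ℤ) ≤ ∏ i ∈ Finset.Ico k t, (q i : ℤ) := by
      have := prod_ge_two q hq k t hkt
      exact_mod_cast this
    have hAabs : |A| = ∏ i ∈ Finset.Ico k t, (q i : ℤ) := by
      rw [hA, abs_mul, abs_pow, abs_neg, abs_one, one_pow, one_mul,
        abs_of_pos (by linarith : (0:ℤ) < ∏ i ∈ Finset.Ico k t, (q i : ℤ))]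
    have hAne1 : A ≠ 1 := by
      intro h
      rw [h] at hAabs
      simp at hAabs
      omega
    have h1A : ((1 : ℝ) - (A : ℝ)) ≠ 0 := by
      intro h
      have : (A : ℝ) = 1 := by linarith
      exact hAne1 (by exact_mod_cast this)
    have hVk : V q ε k = ((B : ℝ)) / (1 - (A : ℝ)) := by
      rw [eq_div_iff h1A]
      have := hB
      rw [← hVkt] at this
      linarith [this]
    have hVkq : V q ε k = (((B : ℚ) / (1 - (A : ℚ)) : ℚ) : ℝ) := by
      rw [hVk]; push_cast; ring
    obtain ⟨s, hs⟩ := descend q ε hq hε k ⟨_, hVkq⟩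
    exact ⟨s, by rw [← hV0, hs]⟩
end

section
/- Let x ∈ [0,1] be given by a Cantor series representation x = ∑_{k=1}^∞ ε_k/(q_1 q_2 ⋯ q_k). Then x is rational if and only if there exist coprime integers h and k with 0 ≤ h ≤ k, a positive integer N, and a strictly increasing sequence of integers 0 = m_0 < m_1 < m_2 < ⋯ (a condensation) such that, setting B_i = q_{m_{i−1}+1} q_{m_{i−1}+2} ⋯ q_{m_i} and A_i = ∑_{j=m_{i−1}+1}^{m_i} ε_j · (q_{j+1} q_{j+2} ⋯ q_{m_i}) (so that A_i/B_i = ∑_{j=m_{i−1}+1}^{m_i} ε_j/(q_{m_{i−1}+1} ⋯ q_j)), one has k · A_i = h · (B_i − 1) for all i ≥ N. -/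
open Finset Filter

namespace CantorAux

/-- partial product `q_0 ⋯ q_{n-1}` -/
def Qp (q : ℕ → ℕ) (n : ℕ) : ℕ := ∏ i ∈ Finset.range n, q i

noncomputable def fc (q ε : ℕ → ℕ) (k : ℕ) : ℝ := (ε k : ℝ) / (Qp q (k + 1) : ℝ)

section

variable {q ε : ℕ → ℕ} (hq : ∀ k, 2 ≤ q k) (hε : ∀ k, ε k < q k)

include hq

lemma Qp_pos (n : ℕ) : 0 < Qp q n :=
  Finset.prod_pos fun i _ => lt_of_lt_of_le two_pos (hq i)

lemma two_pow_le_Qp (n : ℕ) : 2 ^ n ≤ Qp q n := by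
  have h : (2:ℕ) ^ n = ∏ _i ∈ Finset.range n, 2 := by simp
  rw [Qp, h]
  exact Finset.prod_le_prod' fun i _ => hq i

lemma Qp_mul {a b : ℕ} (hab : a ≤ b) :
    Qp q b = Qp q a * ∏ i ∈ Finset.Ico a b, q i :=
  (Finset.prod_range_mul_prod_Ico q hab).symm

lemma Qp_real_pos (n : ℕ) : (0 : ℝ) < (Qp q n : ℝ) := by
  exact_mod_cast Qp_pos hq n

include hε

lemma fc_nonneg (k : ℕ) : 0 ≤ fc q ε k := by
  apply div_nonneg <;> positivity

lemma fc_le (k : ℕ) : fc q ε k ≤ 1 / (Qp q k : ℝ) - 1 / (Qp q (k + 1) : ℝ) := by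
  have hk : (Qp q (k + 1) : ℝ) = (Qp q k : ℝ) * (q k : ℝ) := by
    rw [Qp, Qp, Finset.prod_range_succ]; push_cast; ring
  have h1 : (0:ℝ) < Qp q k := Qp_real_pos hq k
  have h2 : (0:ℝ) < Qp q (k+1) := Qp_real_pos hq (k+1)
  have hq0 : (0:ℝ) < q k := by have := hq k; positivity
  have hrhs : 1 / (Qp q k : ℝ) - 1 / (Qp q (k + 1) : ℝ) = ((q k : ℝ) - 1) / (Qp q (k+1) : ℝ) := by
    rw [hk]; field_simp
  rw [hrhs, fc]
  have hle : (ε k : ℝ) ≤ (q k : ℝ) - 1 := by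
    have h := hε k
    have : (ε k : ℝ) + 1 ≤ (q k : ℝ) := by exact_mod_cast h
    linarith
  gcongr

lemma sum_Ico_fc_le (a b : ℕ) (hab : a ≤ b) :
    ∑ j ∈ Finset.Ico a b, fc q ε j ≤ 1 / (Qp q a : ℝ) - 1 / (Qp q b : ℝ) := by
  calc ∑ j ∈ Finset.Ico a b, fc q ε j
      ≤ ∑ j ∈ Finset.Ico a b, (1 / (Qp q j : ℝ) - 1 / (Qp q (j + 1) : ℝ)) :=
        Finset.sum_le_sum fun j _ => fc_le hq hε j
    _ = 1 / (Qp q a : ℝ) - 1 / (Qp q b : ℝ) := by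
          rw [Finset.sum_Ico_eq_sum_range]
          have key : ∀ n, ∑ i ∈ Finset.range n,
                (1 / (Qp q (a + i) : ℝ) - 1 / (Qp q (a + i + 1) : ℝ))
              = 1 / (Qp q a : ℝ) - 1 / (Qp q (a + n) : ℝ) := by
            intro n
            induction n with
            | zero => simp
            | succ n ih => rw [Finset.sum_range_succ, ih]; ring_nf
          rw [key, Nat.add_sub_cancel' hab]

lemma summable_fc : Summable (fc q ε) := by
  apply summable_of_sum_range_le (fc_nonneg hq hε) (c := 1)
  intro n
  have h := sum_Ico_fc_le hq hε 0 n (Nat.zero_le n)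
  rw [← Finset.range_eq_Ico] at h
  have h0 : Qp q 0 = 1 := by simp [Qp]
  rw [h0] at h
  have hb : (0:ℝ) < Qp q n := Qp_real_pos hq n
  have h1 : (0:ℝ) < 1 / (Qp q n : ℝ) := by positivity
  simp only [Nat.cast_one] at h
  linarith

end

/-- tail sum starting at `a` -/
noncomputable def Tc (q ε : ℕ → ℕ) (a : ℕ) : ℝ := ∑' k, fc q ε (k + a)

section

variable {q ε : ℕ → ℕ} (hq : ∀ k, 2 ≤ q k) (hε : ∀ k, ε k < q k)
include hq hε

lemma sum_add_Tc (a : ℕ) :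
    (∑ j ∈ Finset.range a, fc q ε j) + Tc q ε a = ∑' k, fc q ε k :=
  (summable_fc hq hε).sum_add_tsum_nat_add a

lemma Tc_sub (a b : ℕ) (hab : a ≤ b) :
    Tc q ε a = (∑ j ∈ Finset.Ico a b, fc q ε j) + Tc q ε b := by
  have h1 := sum_add_Tc hq hε a
  have h2 := sum_add_Tc hq hε b
  have h3 : (∑ j ∈ Finset.range a, fc q ε j) + ∑ j ∈ Finset.Ico a b, fc q ε j
      = ∑ j ∈ Finset.range b, fc q ε j := Finset.sum_range_add_sum_Ico _ hab
  linarith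

lemma Tc_nonneg (a : ℕ) : 0 ≤ Tc q ε a :=
  tsum_nonneg fun k => fc_nonneg hq hε _

lemma Tc_le (a : ℕ) : Tc q ε a ≤ 1 / (Qp q a : ℝ) := by
  apply Summable.tsum_le_of_sum_range_le ((summable_nat_add_iff a).mpr (summable_fc hq hε))
  intro n
  have heq : ∑ i ∈ Finset.range n, fc q ε (i + a) = ∑ j ∈ Finset.Ico a (a + n), fc q ε j := by
    rw [Finset.sum_Ico_eq_sum_range]
    simp only [Nat.add_sub_cancel_left]
    exact Finset.sum_congr rfl fun i _ => by rw [add_comm]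
  rw [heq]
  have h := sum_Ico_fc_le hq hε a (a + n) (Nat.le_add_right a n)
  have hp := Qp_real_pos hq (a+n)
  have hb : (0:ℝ) < 1 / (Qp q (a+n) : ℝ) := by positivity
  linarith

/-- The key numeric identity: the block sum times `Qp b` is a natural number. -/
lemma block_sum_eq (a b : ℕ) (hab : a ≤ b) :
    (Qp q b : ℝ) * ∑ j ∈ Finset.Ico a b, fc q ε j =
      ((∑ j ∈ Finset.Ico a b, ε j * ∏ l ∈ Finset.Ico (j + 1) b, q l : ℕ) : ℝ) := by
  rw [Finset.mul_sum]
  push_cast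
  apply Finset.sum_congr rfl
  intro j hj
  have hjb : j + 1 ≤ b := (Finset.mem_Ico.mp hj).2
  have hQ : (Qp q b : ℝ) = (Qp q (j+1) : ℝ) * ((∏ l ∈ Finset.Ico (j+1) b, q l : ℕ) : ℝ) := by
    rw [Qp_mul hq hjb]; push_cast; ring
  rw [fc, hQ]
  have h1 : (Qp q (j+1) : ℝ) ≠ 0 := ne_of_gt (Qp_real_pos hq (j+1))
  field_simp
  push_cast
  ring

lemma block_relation (a b : ℕ) (hab : a ≤ b) :
    (Qp q a : ℝ) * Tc q ε a * ((∏ i ∈ Finset.Ico a b, q i : ℕ) : ℝ) =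
      ((∑ j ∈ Finset.Ico a b, ε j * ∏ l ∈ Finset.Ico (j + 1) b, q l : ℕ) : ℝ)
        + (Qp q b : ℝ) * Tc q ε b := by
  have h1 := Tc_sub hq hε a b hab
  have h2 := block_sum_eq hq hε a b hab
  have h3 : (Qp q b : ℝ) = (Qp q a : ℝ) * ((∏ i ∈ Finset.Ico a b, q i : ℕ) : ℝ) := by
    rw [Qp_mul hq hab]; push_cast; ring
  calc (Qp q a : ℝ) * Tc q ε a * ((∏ i ∈ Finset.Ico a b, q i : ℕ) : ℝ)
      = (Qp q b : ℝ) * Tc q ε a := by rw [h3]; ring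
    _ = (Qp q b : ℝ) * ∑ j ∈ Finset.Ico a b, fc q ε j + (Qp q b : ℝ) * Tc q ε b := by
        rw [h1]; ring
    _ = _ := by rw [h2]

end

end CantorAux

open CantorAux in
/-- (Diananda–Oppenheim) A number `x ∈ [0,1]` represented by the Cantor
series `x = ∑ ε_k / (q_1 ⋯ q_k)` is rational iff there are coprime integers `0 ≤ h ≤ k`,
a positive integer `N`, and a condensation `0 = m_0 < m_1 < m_2 < ⋯` such that, with
`B_i = q_{m_{i−1}+1} ⋯ q_{m_i}` and `A_i = ∑_{j=m_{i−1}+1}^{m_i} ε_j (q_{j+1} ⋯ q_{m_i})`,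
one has `k ⬝ A_i = h ⬝ (B_i − 1)` for all `i ≥ N`. (Sequences are 0-indexed, so
`B_i = ∏_{j ∈ [m_{i−1}, m_i)} q j` and `A_i = ∑_{j ∈ [m_{i−1}, m_i)} ε j ∏_{l ∈ [j+1, m_i)} q l`.) -/
theorem cantor_rational_iff_condensation
    (q ε : ℕ → ℕ) (hq : ∀ k, 2 ≤ q k) (hε : ∀ k, ε k < q k)
    (x : ℝ) (hmem : x ∈ Set.Icc (0 : ℝ) 1)
    (hx : x = ∑' k : ℕ, (ε k : ℝ) / ∏ i ∈ Finset.range (k + 1), (q i : ℝ)) :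
    (∃ r : ℚ, x = (r : ℝ)) ↔
      ∃ h k : ℕ, Nat.Coprime h k ∧ h ≤ k ∧
        ∃ N : ℕ, 0 < N ∧ ∃ m : ℕ → ℕ, m 0 = 0 ∧ StrictMono m ∧
          ∀ i ≥ N, k * (∑ j ∈ Finset.Ico (m (i - 1)) (m i),
              ε j * ∏ l ∈ Finset.Ico (j + 1) (m i), q l) =
            h * ((∏ j ∈ Finset.Ico (m (i - 1)) (m i), q j) - 1) := by
  have hx' : x = ∑' k : ℕ, fc q ε k := by
    rw [hx]
    apply tsum_congr
    intro k
    rw [fc, Qp]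
    push_cast
    rfl
  constructor
  · -- rational ⇒ condensation
    rintro ⟨r, hr⟩
    -- the integer numerators of the tails
    set c : ℕ → ℕ := fun n => ∑ j ∈ Finset.Ico 0 n, ε j * ∏ l ∈ Finset.Ico (j + 1) n, q l
      with hc
    have hQT : ∀ n : ℕ, (Qp q n : ℝ) * Tc q ε n = (Qp q n : ℝ) * (r : ℝ) - (c n : ℝ) := by
      intro n
      have h1 := sum_add_Tc hq hε n
      rw [← hx'] at h1
      have h2 := block_sum_eq hq hε 0 n (Nat.zero_le n)
      rw [← Finset.range_eq_Ico] at h2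
      have h3 : Tc q ε n = x - ∑ j ∈ Finset.range n, fc q ε j := by linarith
      rw [h3, hr, mul_sub, h2, hc]
      beta_reduce
      rw [← Finset.range_eq_Ico]
    set ρ : ℕ → ℚ := fun n => (Qp q n : ℚ) * r - (c n : ℚ) with hρdef
    have hρ : ∀ n : ℕ, ((ρ n : ℚ) : ℝ) = (Qp q n : ℝ) * Tc q ε n := by
      intro n; rw [hQT n, hρdef]; push_cast; ring
    have hρ0 : ∀ n, 0 ≤ ρ n := by
      intro n
      have : (0:ℝ) ≤ ((ρ n : ℚ) : ℝ) := by
        rw [hρ n]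
        exact mul_nonneg (le_of_lt (Qp_real_pos hq n)) (Tc_nonneg hq hε n)
      exact_mod_cast this
    have hρ1 : ∀ n, ρ n ≤ 1 := by
      intro n
      have hp := Qp_real_pos hq n
      have : ((ρ n : ℚ) : ℝ) ≤ 1 := by
        rw [hρ n]
        have := Tc_le hq hε n
        calc (Qp q n : ℝ) * Tc q ε n ≤ (Qp q n : ℝ) * (1 / (Qp q n : ℝ)) := by
              exact mul_le_mul_of_nonneg_left this (le_of_lt hp)
          _ = 1 := by field_simp
      exact_mod_cast this
    -- integer values
    set z : ℕ → ℤ := fun n => (Qp q n : ℤ) * r.num - (c n : ℤ) * (r.den : ℤ) with hzdef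
    have hz : ∀ n, (z n : ℚ) = ρ n * (r.den : ℚ) := by
      intro n
      rw [hzdef, hρdef]
      push_cast
      rw [sub_mul, mul_assoc, Rat.mul_den_eq_num]
    have hden : (0:ℚ) < (r.den : ℚ) := by exact_mod_cast r.pos
    have hz0 : ∀ n, 0 ≤ z n := by
      intro n
      have : (0:ℚ) ≤ (z n : ℚ) := by
        rw [hz n]; exact mul_nonneg (hρ0 n) (le_of_lt hden)
      exact_mod_cast this
    have hz1 : ∀ n, z n ≤ (r.den : ℤ) := by
      intro n
      have : (z n : ℚ) ≤ (r.den : ℚ) := by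
        rw [hz n]
        calc ρ n * (r.den : ℚ) ≤ 1 * (r.den : ℚ) :=
              mul_le_mul_of_nonneg_right (hρ1 n) (le_of_lt hden)
          _ = (r.den : ℚ) := one_mul _
      exact_mod_cast this
    -- pigeonhole
    set F : ℕ → Finset.Icc (0:ℤ) (r.den : ℤ) := fun n =>
      ⟨z n, Finset.mem_Icc.mpr ⟨hz0 n, hz1 n⟩⟩ with hF
    obtain ⟨y, hy⟩ := Finite.exists_infinite_fiber F
    have hSinf : (F ⁻¹' {y}).Infinite := @Set.infinite_coe_iff _ (F ⁻¹' {y}) |>.mp hy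
    set p : ℕ → Prop := fun n => 0 < n ∧ F n = y with hp
    have hpinf : (setOf p).Infinite := by
      apply Set.Infinite.mono (s := (F ⁻¹' {y}) \ {0})
      · intro n hn
        simp only [Set.mem_diff, Set.mem_preimage, Set.mem_singleton_iff] at hn
        exact ⟨Nat.pos_of_ne_zero hn.2, hn.1⟩
      · exact hSinf.diff (Set.finite_singleton 0)
    -- the constant rational value
    set n₀ := Nat.nth p 0 with hn₀
    set ρ₀ := ρ n₀ with hρ₀
    have hconst : ∀ n, p n → ρ n = ρ₀ := by
      intro n hn
      have h0 : p n₀ := Nat.nth_mem_of_infinite hpinf 0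
      have hzn : z n = z n₀ := by
        have e1 : F n = y := hn.2
        have e2 : F n₀ = y := h0.2
        have := e1.trans e2.symm
        simpa [hF, Subtype.ext_iff] using this
      have : ρ n * (r.den : ℚ) = ρ₀ * (r.den : ℚ) := by
        rw [hρ₀, ← hz n, ← hz n₀, hzn]
      exact mul_right_cancel₀ (ne_of_gt hden) this
    -- h and k
    refine ⟨ρ₀.num.toNat, ρ₀.den, ?_, ?_, 2, two_pos, ?_⟩
    · have hnum : ρ₀.num.toNat = ρ₀.num.natAbs := by
        have := hρ0 n₀
        have h1 : 0 ≤ ρ₀.num := Rat.num_nonneg.mpr this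
        omega
      rw [hnum]
      exact ρ₀.reduced
    · have h1 : 0 ≤ ρ₀.num := Rat.num_nonneg.mpr (hρ0 n₀)
      have hle : ρ₀ ≤ 1 := hρ1 n₀
      have h3 : ρ₀ * (ρ₀.den : ℚ) ≤ 1 * (ρ₀.den : ℚ) := by
        apply mul_le_mul_of_nonneg_right hle
        exact_mod_cast (ρ₀.pos).le
      rw [Rat.mul_den_eq_num, one_mul] at h3
      have h2 : ρ₀.num ≤ (ρ₀.den : ℤ) := by exact_mod_cast h3
      omega
    -- the condensation
    refine ⟨fun i => if i = 0 then 0 else Nat.nth p (i - 1), rfl, ?_, ?_⟩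
    · apply strictMono_nat_of_lt_succ
      intro i
      cases i with
      | zero =>
        simp only [if_pos rfl, if_neg (Nat.one_ne_zero)]
        exact (Nat.nth_mem_of_infinite hpinf 0).1
      | succ i =>
        simp only [if_neg (Nat.succ_ne_zero i), if_neg (Nat.succ_ne_zero (i+1)),
          Nat.succ_sub_one]
        exact (Nat.nth_lt_nth hpinf).mpr (lt_add_one i)
    · intro i hi
      have hi1 : i - 1 ≠ 0 := by omega
      have hi2 : i ≠ 0 := by omega
      simp only [if_neg hi1, if_neg hi2]
      set a := Nat.nth p (i - 1 - 1) with ha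
      set b := Nat.nth p (i - 1) with hb
      have hpa : p a := Nat.nth_mem_of_infinite hpinf _
      have hpb : p b := Nat.nth_mem_of_infinite hpinf _
      have hab : a ≤ b := by
        have : i - 1 - 1 < i - 1 := by omega
        exact le_of_lt ((Nat.nth_lt_nth hpinf).mpr this)
      have hρa : ρ a = ρ₀ := hconst a hpa
      have hρb : ρ b = ρ₀ := hconst b hpb
      set B := ∏ j ∈ Finset.Ico a b, q j with hB
      set A := ∑ j ∈ Finset.Ico a b, ε j * ∏ l ∈ Finset.Ico (j + 1) b, q l with hA
      have hbr := block_relation hq hε a b hab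
      rw [← hρ a, ← hρ b, hρa, hρb] at hbr
      -- hbr : (ρ₀:ℝ) * B = A + ρ₀
      have hQ : (ρ₀ : ℚ) * (B : ℚ) = (A : ℚ) + ρ₀ := by exact_mod_cast hbr
      have hB1 : 1 ≤ B := by
        rw [hB]
        exact Finset.one_le_prod' fun j _ => le_trans one_le_two (hq j)
      -- multiply by den
      have hQ2 : (ρ₀.num : ℚ) * (B : ℚ) = (ρ₀.den : ℚ) * (A : ℚ) + (ρ₀.num : ℚ) := by
        have := congrArg (· * (ρ₀.den : ℚ)) hQ
        calc (ρ₀.num : ℚ) * (B : ℚ) = ρ₀ * (ρ₀.den : ℚ) * (B:ℚ) := by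
              rw [Rat.mul_den_eq_num]
          _ = ((A : ℚ) + ρ₀) * (ρ₀.den : ℚ) := by rw [← this]; ring
          _ = (ρ₀.den : ℚ) * (A : ℚ) + ρ₀ * (ρ₀.den : ℚ) := by ring
          _ = _ := by rw [Rat.mul_den_eq_num]
      have hZ : ρ₀.num * (B : ℤ) = (ρ₀.den : ℤ) * (A : ℤ) + ρ₀.num := by
        exact_mod_cast hQ2
      have hnum : (ρ₀.num.toNat : ℤ) = ρ₀.num :=
        Int.toNat_of_nonneg (Rat.num_nonneg.mpr (hρ0 n₀))
      have : (ρ₀.den : ℤ) * (A : ℤ) = (ρ₀.num.toNat : ℤ) * ((B : ℤ) - 1) := by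
        rw [hnum]; linarith [hZ]
      have hgoal : (ρ₀.den * A : ℤ) = (ρ₀.num.toNat * (B - 1) : ℕ) := by
        push_cast [hB1]
        exact_mod_cast this
      exact_mod_cast hgoal
  · -- condensation ⇒ rational
    rintro ⟨h, k, hcop, hhk, N, hN, m, hm0, hmono, hcond⟩
    have hk0 : 0 < k := by
      rcases Nat.eq_zero_or_pos k with hk | hk
      · subst hk
        rw [Nat.coprime_zero_right] at hcop
        omega
      · exact hk
    have hkR : ((k:ℝ)) ≠ 0 := by positivity
    set u : ℕ → ℝ := fun j => (Qp q (m j) : ℝ) * Tc q ε (m j) - (h : ℝ) / (k : ℝ) with hu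
    -- one-step relation
    have step : ∀ i, N ≤ i → u (i - 1) *
        ((∏ j ∈ Finset.Ico (m (i - 1)) (m i), q j : ℕ) : ℝ) = u i := by
      intro i hi
      have hab : m (i - 1) ≤ m i := le_of_lt (hmono (by omega))
      set B := ∏ j ∈ Finset.Ico (m (i - 1)) (m i), q j with hB
      set A := ∑ j ∈ Finset.Ico (m (i - 1)) (m i), ε j * ∏ l ∈ Finset.Ico (j + 1) (m i), q l
        with hA
      have hB1 : 1 ≤ B := Finset.one_le_prod' fun j _ => le_trans one_le_two (hq j)
      have hc := hcond i hi
      have hcR : (k : ℝ) * (A : ℝ) = (h : ℝ) * ((B : ℝ) - 1) := by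
        have : ((k * A : ℕ) : ℝ) = ((h * (B - 1) : ℕ) : ℝ) := by exact_mod_cast hc
        push_cast [hB1] at this
        linarith
      have hbr := block_relation hq hε (m (i-1)) (m i) hab
      rw [← hB, ← hA] at hbr
      have e1 : ((h:ℝ)/(k:ℝ)) * (B:ℝ) - (h:ℝ)/(k:ℝ) = (A:ℝ) := by
        field_simp
        linarith [hcR]
      rw [hu]
      simp only
      calc ((Qp q (m (i-1)) : ℝ) * Tc q ε (m (i-1)) - (h:ℝ)/(k:ℝ)) * (B:ℝ)
          = (Qp q (m (i-1)) : ℝ) * Tc q ε (m (i-1)) * (B:ℝ) - ((h:ℝ)/(k:ℝ) * (B:ℝ)) := by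
            ring
        _ = ((A:ℝ) + (Qp q (m i) : ℝ) * Tc q ε (m i)) - ((h:ℝ)/(k:ℝ) * (B:ℝ)) := by
            rw [hbr]
        _ = (Qp q (m i) : ℝ) * Tc q ε (m i) - (h:ℝ)/(k:ℝ) := by linarith [e1]
    -- iterated relation
    have key : ∀ d : ℕ, u (N - 1) * (Qp q (m (N - 1 + d)) : ℝ)
        = u (N - 1 + d) * (Qp q (m (N - 1)) : ℝ) := by
      intro d
      induction d with
      | zero => simp
      | succ d ih =>
        have hNd : N ≤ N - 1 + d + 1 := by omega
        have hsub : N - 1 + d + 1 - 1 = N - 1 + d := by omega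
        have hs := step (N - 1 + d + 1) hNd
        rw [hsub] at hs
        have hab : m (N - 1 + d) ≤ m (N - 1 + d + 1) := le_of_lt (hmono (by omega))
        have hQm : (Qp q (m (N - 1 + d + 1)) : ℝ) = (Qp q (m (N - 1 + d)) : ℝ) *
            ((∏ j ∈ Finset.Ico (m (N - 1 + d)) (m (N - 1 + d + 1)), q j : ℕ) : ℝ) := by
          rw [Qp_mul hq hab]
          · push_cast; ring
        calc u (N - 1) * (Qp q (m (N - 1 + d + 1)) : ℝ)
            = u (N - 1) * (Qp q (m (N - 1 + d)) : ℝ) *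
              ((∏ j ∈ Finset.Ico (m (N - 1 + d)) (m (N - 1 + d + 1)), q j : ℕ) : ℝ) := by
              rw [hQm]; ring
          _ = u (N - 1 + d) * (Qp q (m (N - 1)) : ℝ) *
              ((∏ j ∈ Finset.Ico (m (N - 1 + d)) (m (N - 1 + d + 1)), q j : ℕ) : ℝ) := by
              rw [ih]
          _ = u (N - 1 + d + 1) * (Qp q (m (N - 1)) : ℝ) := by
              rw [← hs]; ring
    -- |u j| ≤ 1
    have hu1 : ∀ j, |u j| ≤ 1 := by
      intro j
      have hp := Qp_real_pos hq (m j)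
      have h1 : 0 ≤ (Qp q (m j) : ℝ) * Tc q ε (m j) :=
        mul_nonneg (le_of_lt hp) (Tc_nonneg hq hε (m j))
      have h2 : (Qp q (m j) : ℝ) * Tc q ε (m j) ≤ 1 := by
        calc (Qp q (m j) : ℝ) * Tc q ε (m j)
            ≤ (Qp q (m j) : ℝ) * (1 / (Qp q (m j) : ℝ)) :=
              mul_le_mul_of_nonneg_left (Tc_le hq hε (m j)) (le_of_lt hp)
          _ = 1 := by field_simp
      have h3 : (0:ℝ) ≤ (h : ℝ) / (k : ℝ) := by positivity
      have h4 : (h : ℝ) / (k : ℝ) ≤ 1 := by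
        rw [div_le_one (by positivity)]
        exact_mod_cast hhk
      rw [hu, abs_le]
      constructor <;> simp only <;> linarith
    -- conclude u (N-1) = 0
    have huz : u (N - 1) = 0 := by
      have hbound : ∀ d : ℕ, |u (N - 1)| ≤ (Qp q (m (N - 1)) : ℝ) * (1 / 2) ^ d := by
        intro d
        have hkey := key d
        have h2d : (2:ℝ) ^ d ≤ (Qp q (m (N - 1 + d)) : ℝ) := by
          have hmd : d ≤ m (N - 1 + d) := le_trans (by omega) (hmono.le_apply)
          have : (2:ℕ) ^ d ≤ Qp q (m (N - 1 + d)) :=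
            le_trans (Nat.pow_le_pow_right (by norm_num) hmd) (two_pow_le_Qp hq _)
          exact_mod_cast this
        have hqp := Qp_real_pos hq (m (N - 1))
        have hqd := Qp_real_pos hq (m (N - 1 + d))
        have habs : |u (N - 1)| * (Qp q (m (N - 1 + d)) : ℝ)
            = |u (N - 1 + d)| * (Qp q (m (N - 1)) : ℝ) := by
          rw [← abs_of_pos hqd, ← abs_of_pos hqp, ← abs_mul, ← abs_mul, hkey]
        have hle : |u (N - 1)| * (2:ℝ) ^ d ≤ (Qp q (m (N - 1)) : ℝ) := by
          calc |u (N - 1)| * (2:ℝ) ^ d ≤ |u (N - 1)| * (Qp q (m (N - 1 + d)) : ℝ) :=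
                mul_le_mul_of_nonneg_left h2d (abs_nonneg _)
            _ = |u (N - 1 + d)| * (Qp q (m (N - 1)) : ℝ) := habs
            _ ≤ 1 * (Qp q (m (N - 1)) : ℝ) :=
                mul_le_mul_of_nonneg_right (hu1 _) (le_of_lt hqp)
            _ = (Qp q (m (N - 1)) : ℝ) := one_mul _
        have h2pos : (0:ℝ) < (2:ℝ) ^ d := by positivity
        rw [div_pow, one_pow, ← mul_div_assoc, le_div_iff₀ h2pos]
        calc |u (N - 1)| * 2 ^ d ≤ (Qp q (m (N - 1)) : ℝ) := hle
          _ = (Qp q (m (N - 1)) : ℝ) * 1 := (mul_one _).symm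
      have htend : Tendsto (fun d : ℕ => (Qp q (m (N - 1)) : ℝ) * (1 / 2) ^ d)
          atTop (nhds 0) := by
        have : Tendsto (fun d : ℕ => ((1:ℝ) / 2) ^ d) atTop (nhds 0) :=
          tendsto_pow_atTop_nhds_zero_of_lt_one (by norm_num) (by norm_num)
        simpa using this.const_mul (Qp q (m (N - 1)) : ℝ)
      have : |u (N - 1)| ≤ 0 := ge_of_tendsto' htend hbound
      have := abs_nonneg (u (N - 1))
      have habs0 : |u (N - 1)| = 0 := le_antisymm ‹|u (N-1)| ≤ 0› this
      exact abs_eq_zero.mp habs0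
    -- now compute x
    have hT : Tc q ε (m (N - 1)) = ((h : ℝ) / (k : ℝ)) / (Qp q (m (N - 1)) : ℝ) := by
      have hp := Qp_real_pos hq (m (N - 1))
      have : (Qp q (m (N - 1)) : ℝ) * Tc q ε (m (N - 1)) = (h : ℝ) / (k : ℝ) := by
        have := huz
        rw [hu] at this
        simp only at this
        linarith
      rw [eq_div_iff (ne_of_gt hp)]
      linear_combination this
    refine ⟨(∑ j ∈ Finset.range (m (N - 1)), (ε j : ℚ) / (Qp q (j + 1) : ℚ))
      + ((h : ℚ) / (k : ℚ)) / (Qp q (m (N - 1)) : ℚ), ?_⟩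
    have hsum := sum_add_Tc hq hε (m (N - 1))
    rw [← hx'] at hsum
    rw [← hsum, hT]
    push_cast
    congr 1
end

section
/- Let (q_k) and (ε_k) be sequences of positive integers with q_k ≥ 2 for all k, and suppose the series S = ∑_{k=1}^∞ ε_k/(q_1 q_2 ⋯ q_k) converges. For N ≥ 1 set S_N = ∑_{k=N}^∞ ε_k/(q_N q_{N+1} ⋯ q_k). If S = r/p for some integer r and positive integer p, then p · S_N is an integer for every positive integer N. -/
open Finset Filter

/-- The tail sum `S_{N+1} = ∑_{k=N+1}^∞ ε_k/(q_{N+1} ⋯ q_k)` of a Cantor series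
(0-indexed: `cantorTail q ε N` is the paper's `S_{N+1}`). -/
noncomputable def cantorTail (q ε : ℕ → ℕ) (N : ℕ) : ℝ :=
  ∑' j : ℕ, (ε (N + j) : ℝ) / ∏ i ∈ Finset.Ico N (N + j + 1), (q i : ℝ)

/-- (Hančl–Tijdeman) Let `(q_k)`, `(ε_k)` be positive integers with
`q_k ≥ 2`, and suppose `S = ∑ ε_k/(q_1⋯q_k)` converges. If `S = r/p` with `r ∈ ℤ`,
`p ∈ ℕ⁺`, then `p ⬝ S_N ∈ ℤ` for every `N ≥ 1`. (Sequences are 0-indexed.) -/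
theorem hancl_tijdeman_tail_integer
    (q ε : ℕ → ℕ) (hq : ∀ k, 2 ≤ q k) (hε : ∀ k, 0 < ε k)
    (hsum : Summable (fun k : ℕ => (ε k : ℝ) / ∏ i ∈ Finset.range (k + 1), (q i : ℝ)))
    (r : ℤ) (p : ℕ) (hp : 0 < p)
    (hS : (∑' k : ℕ, (ε k : ℝ) / ∏ i ∈ Finset.range (k + 1), (q i : ℝ)) = (r : ℝ) / (p : ℝ)) :
    ∀ N : ℕ, ∃ z : ℤ, (p : ℝ) * cantorTail q ε N = (z : ℝ) := by
  set a : ℕ → ℝ := fun k => (ε k : ℝ) / ∏ i ∈ Finset.range (k + 1), (q i : ℝ) with ha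
  have hq0 : ∀ i, (q i : ℝ) ≠ 0 := fun i => by
    have h := hq i
    exact_mod_cast (by omega : q i ≠ 0)
  have hP : ∀ N, (∏ i ∈ Finset.range N, (q i : ℝ)) ≠ 0 :=
    fun N => Finset.prod_ne_zero_iff.mpr fun i _ => hq0 i
  have hsa : ∀ N, Summable (fun j => a (N + j)) := fun N =>
    ((summable_nat_add_iff N).mpr hsum).congr (fun j => by simp [add_comm])
  have hCT : ∀ N, cantorTail q ε N
      = (∏ i ∈ Finset.range N, (q i : ℝ)) * ∑' j, a (N + j) := by
    intro N
    rw [cantorTail, ← tsum_mul_left]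
    refine tsum_congr fun j => ?_
    have hsplit : (∏ i ∈ Finset.range (N + j + 1), (q i : ℝ))
        = (∏ i ∈ Finset.range N, (q i : ℝ)) * ∏ i ∈ Finset.Ico N (N + j + 1), (q i : ℝ) :=
      (Finset.prod_range_mul_prod_Ico _ (by omega)).symm
    have h2 : (∏ i ∈ Finset.Ico N (N + j + 1), (q i : ℝ)) ≠ 0 :=
      Finset.prod_ne_zero_iff.mpr fun i _ => hq0 i
    rw [ha]
    simp only []
    rw [hsplit]
    field_simp
    refine (eq_div_iff (hP N)).mpr ?_
    ring
  have hT : ∀ N, (∑' j, a (N + j)) = a N + ∑' j, a (N + 1 + j) := by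
    intro N
    rw [Summable.tsum_eq_zero_add (hsa N), add_zero]
    congr 1
    exact tsum_congr fun j => by ring_nf
  intro N
  induction N with
  | zero =>
    refine ⟨r, ?_⟩
    have h0 : cantorTail q ε 0 = (r : ℝ) / p := by
      rw [hCT 0, Finset.range_zero, Finset.prod_empty, one_mul, ← hS]
      exact tsum_congr fun j => by rw [zero_add]
    rw [h0]
    have hp0 : (p : ℝ) ≠ 0 := by positivity
    field_simp
  | succ N ih =>
    obtain ⟨z, hz⟩ := ih
    refine ⟨q N * z - p * ε N, ?_⟩
    have haN : (q N : ℝ) * ((∏ i ∈ Finset.range N, (q i : ℝ)) * a N) = ε N := by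
      rw [ha]
      simp only []
      rw [Finset.prod_range_succ]
      have h1 := hq0 N
      have h2 := hP N
      field_simp
    have hstep : cantorTail q ε (N + 1) = q N * cantorTail q ε N - ε N := by
      rw [hCT (N + 1), hCT N, hT N, Finset.prod_range_succ, ← haN]
      ring
    have : (p : ℝ) * cantorTail q ε (N + 1)
        = q N * ((p : ℝ) * cantorTail q ε N) - p * ε N := by rw [hstep]; ring
    rw [this, hz]
    push_cast
    ring
end

section
/- Let (q_k) and (ε_k) be sequences of positive integers with q_k ≥ 2 for all k, suppose the series S = ∑_{k=1}^∞ ε_k/(q_1 q_2 ⋯ q_k) converges, and set S_N = ∑_{k=N}^∞ ε_k/(q_N q_{N+1} ⋯ q_k). If the sequence (S_k) is bounded from below and for every ε > 0 there exists k_0(ε) such that S_{k+1} − S_k < ε for all k ≥ k_0(ε), then S is rational if and only if there exist a rational constant c and a positive integer N_0 such that ε_k = c · (q_k − 1) for all k > N_0. -/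
open Finset Filter

lemma qprod_pos (q : ℕ → ℕ) (hq : ∀ k, 2 ≤ q k) (s : Finset ℕ) :
    0 < ∏ i ∈ s, (q i : ℝ) :=
  Finset.prod_pos fun i _ => by
    have : 0 < q i := by have := hq i; omega
    exact_mod_cast this

lemma tail_summable (q ε : ℕ → ℕ) (hq : ∀ k, 2 ≤ q k)
    (hsum : Summable (fun k : ℕ => (ε k : ℝ) / ∏ i ∈ Finset.range (k + 1), (q i : ℝ))) (N : ℕ) :
    Summable (fun j : ℕ => (ε (N + j) : ℝ) / ∏ i ∈ Finset.Ico N (N + j + 1), (q i : ℝ)) := by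
  have h1 : Summable (fun j : ℕ =>
      (ε (j + N) : ℝ) / ∏ i ∈ Finset.range (j + N + 1), (q i : ℝ)) :=
    (summable_nat_add_iff
      (f := fun k : ℕ => (ε k : ℝ) / ∏ i ∈ Finset.range (k + 1), (q i : ℝ)) N).2 hsum
  have h2 := h1.mul_left (∏ i ∈ Finset.range N, (q i : ℝ))
  refine h2.congr fun j => ?_
  have hle : N ≤ N + j + 1 := by omega
  have hpr := Finset.prod_range_mul_prod_Ico (fun i => (q i : ℝ)) hle
  have hR : 0 < ∏ i ∈ Finset.range N, (q i : ℝ) := qprod_pos q hq _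
  have hcomm : j + N = N + j := by omega
  rw [hcomm, ← hpr, mul_div_assoc', mul_div_mul_left _ _ hR.ne']

lemma cantorTail_rec (q ε : ℕ → ℕ) (hq : ∀ k, 2 ≤ q k)
    (hsum : Summable (fun k : ℕ => (ε k : ℝ) / ∏ i ∈ Finset.range (k + 1), (q i : ℝ))) (N : ℕ) :
    (q N : ℝ) * cantorTail q ε N = (ε N : ℝ) + cantorTail q ε (N + 1) := by
  have hs := tail_summable q ε hq hsum N
  have hqN : (0:ℝ) < q N := by
    have : 0 < q N := by have := hq N; omega
    exact_mod_cast this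
  rw [cantorTail, Summable.tsum_eq_zero_add hs]
  have h0 : (ε (N + 0) : ℝ) / ∏ i ∈ Finset.Ico N (N + 0 + 1), (q i : ℝ) = (ε N : ℝ) / q N := by
    simp
  have hshift : ∀ j : ℕ,
      (ε (N + (j + 1)) : ℝ) / ∏ i ∈ Finset.Ico N (N + (j + 1) + 1), (q i : ℝ)
        = (q N : ℝ)⁻¹ * ((ε (N + 1 + j) : ℝ) / ∏ i ∈ Finset.Ico (N + 1) (N + 1 + j + 1), (q i : ℝ)) := by
    intro j
    have hlt : N < N + (j + 1) + 1 := by omega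
    rw [Finset.prod_eq_prod_Ico_succ_bot hlt]
    have he1 : N + (j + 1) = N + 1 + j := by omega
    rw [he1]
    have hI : 0 < ∏ i ∈ Finset.Ico (N + 1) (N + 1 + j + 1), (q i : ℝ) := qprod_pos q hq _
    field_simp
  rw [h0, tsum_congr hshift, tsum_mul_left, cantorTail]
  field_simp

lemma cantorTail_zero_eq (q ε : ℕ → ℕ) :
    cantorTail q ε 0 = ∑' k : ℕ, (ε k : ℝ) / ∏ i ∈ Finset.range (k + 1), (q i : ℝ) := by
  refine tsum_congr fun j => ?_
  simp only [zero_add, Finset.range_eq_Ico]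

lemma cantorTail_const (q ε : ℕ → ℕ) (hq : ∀ k, 2 ≤ q k) (hε : ∀ k, 0 < ε k)
    (c : ℚ) (N₀ : ℕ) (hc : ∀ k ≥ N₀, (ε k : ℚ) = c * ((q k : ℚ) - 1)) :
    cantorTail q ε N₀ = (c : ℝ) := by
  have hcpos : 0 < c := by
    have h1 := hc N₀ le_rfl
    have h2 : (0:ℚ) < ε N₀ := by exact_mod_cast hε N₀
    have h3 : (0:ℚ) < (q N₀ : ℚ) - 1 := by
      have := hq N₀
      have : (2:ℚ) ≤ q N₀ := by exact_mod_cast this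
      linarith
    nlinarith [h1]
  set a : ℕ → ℝ := fun j => (∏ i ∈ Finset.Ico N₀ (N₀ + j), (q i : ℝ))⁻¹ with ha
  have hp : ∀ j, 0 < ∏ i ∈ Finset.Ico N₀ (N₀ + j), (q i : ℝ) := fun j => qprod_pos q hq _
  have hterm : ∀ j : ℕ,
      (ε (N₀ + j) : ℝ) / ∏ i ∈ Finset.Ico N₀ (N₀ + j + 1), (q i : ℝ)
        = (c : ℝ) * (a j - a (j + 1)) := by
    intro j
    have hε' : (ε (N₀ + j) : ℝ) = (c : ℝ) * ((q (N₀ + j) : ℝ) - 1) := by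
      have := hc (N₀ + j) (by omega)
      exact_mod_cast this
    have hsplit : ∏ i ∈ Finset.Ico N₀ (N₀ + j + 1), (q i : ℝ)
        = (∏ i ∈ Finset.Ico N₀ (N₀ + j), (q i : ℝ)) * (q (N₀ + j) : ℝ) :=
      Finset.prod_Ico_succ_top (by omega) _
    have hsplit' : ∏ i ∈ Finset.Ico N₀ (N₀ + (j + 1)), (q i : ℝ)
        = (∏ i ∈ Finset.Ico N₀ (N₀ + j), (q i : ℝ)) * (q (N₀ + j) : ℝ) := by
      rw [show N₀ + (j + 1) = N₀ + j + 1 by omega]; exact hsplit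
    have hqj : (0:ℝ) < q (N₀ + j) := by
      have : 0 < q (N₀ + j) := by have := hq (N₀ + j); omega
      exact_mod_cast this
    have hqj' : (q (N₀ + j) : ℝ) ≠ 0 := hqj.ne'
    have hP : (∏ i ∈ Finset.Ico N₀ (N₀ + j), (q i : ℝ)) ≠ 0 := (hp j).ne'
    rw [hε', ha]
    simp only [hsplit, hsplit']
    field_simp
  have hnonneg : ∀ j : ℕ, 0 ≤ (ε (N₀ + j) : ℝ) / ∏ i ∈ Finset.Ico N₀ (N₀ + j + 1), (q i : ℝ) :=
    fun j => div_nonneg (by positivity) (qprod_pos q hq _).le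
  have ha0 : a 0 = 1 := by simp [ha]
  have hatend : Tendsto a atTop (nhds 0) := by
    have hub : ∀ n, a n ≤ (2⁻¹ : ℝ) ^ n := by
      intro n
      have h2n : (2:ℝ) ^ n ≤ ∏ i ∈ Finset.Ico N₀ (N₀ + n), (q i : ℝ) := by
        have : ∏ i ∈ Finset.Ico N₀ (N₀ + n), (2:ℝ) ≤ ∏ i ∈ Finset.Ico N₀ (N₀ + n), (q i : ℝ) :=
          Finset.prod_le_prod (fun i _ => by norm_num)
            (fun i _ => by exact_mod_cast hq i)
        simpa [Finset.prod_const, Nat.card_Ico] using this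
      have := inv_anti₀ (by positivity) h2n
      simpa [inv_pow] using this
    have hlb : ∀ n, 0 ≤ a n := fun n => (inv_pos.2 (hp n)).le
    exact squeeze_zero hlb hub (tendsto_pow_atTop_nhds_zero_of_lt_one (by norm_num) (by norm_num))
  have hhs : HasSum (fun j : ℕ =>
      (ε (N₀ + j) : ℝ) / ∏ i ∈ Finset.Ico N₀ (N₀ + j + 1), (q i : ℝ)) (c : ℝ) := by
    rw [hasSum_iff_tendsto_nat_of_nonneg hnonneg]
    have hps : ∀ n : ℕ, ∑ j ∈ Finset.range n,
        (ε (N₀ + j) : ℝ) / ∏ i ∈ Finset.Ico N₀ (N₀ + j + 1), (q i : ℝ)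
          = (c : ℝ) * (1 - a n) := by
      intro n
      rw [Finset.sum_congr rfl fun j _ => hterm j, ← Finset.mul_sum,
        Finset.sum_range_sub' a n, ha0]
    simp only [hps]
    have : Tendsto (fun n => (c:ℝ) * (1 - a n)) atTop (nhds ((c:ℝ) * (1 - 0))) :=
      (tendsto_const_nhds.sub hatend).const_mul _
    simpa using this
  exact hhs.tsum_eq

/-- (Hančl–Tijdeman) Let `(q_k)`, `(ε_k)` be positive integers with
`q_k ≥ 2` and `S = ∑ ε_k/(q_1⋯q_k)` convergent. If `(S_k)` is bounded from below and for
every `δ > 0` one has `S_{k+1} − S_k < δ` for all `k ≥ k₀(δ)`, then `S ∈ ℚ` iff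
`ε_k/(q_k − 1)` is a (rational) constant `c` for all `k` greater than some `N₀`.
(Sequences are 0-indexed.) -/
theorem hancl_tijdeman_rational_iff_const_ratio
    (q ε : ℕ → ℕ) (hq : ∀ k, 2 ≤ q k) (hε : ∀ k, 0 < ε k)
    (hsum : Summable (fun k : ℕ => (ε k : ℝ) / ∏ i ∈ Finset.range (k + 1), (q i : ℝ)))
    (hbdd : ∃ C : ℝ, ∀ k : ℕ, C ≤ cantorTail q ε k)
    (hcauchy : ∀ δ : ℝ, 0 < δ → ∃ k₀ : ℕ, ∀ k ≥ k₀, cantorTail q ε (k + 1) - cantorTail q ε k < δ) :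
    (∃ r : ℚ, (∑' k : ℕ, (ε k : ℝ) / ∏ i ∈ Finset.range (k + 1), (q i : ℝ)) = (r : ℝ)) ↔
      ∃ c : ℚ, ∃ N₀ : ℕ, ∀ k ≥ N₀, (ε k : ℚ) = c * ((q k : ℚ) - 1) := by
  have hqR : ∀ k, (0:ℝ) < q k := by
    intro k
    have : 0 < q k := by have := hq k; omega
    exact_mod_cast this
  constructor
  · rintro ⟨r, hr⟩
    obtain ⟨C, hC⟩ := hbdd
    set b : ℕ := r.den with hb
    have hbpos : (0:ℝ) < b := by exact_mod_cast r.pos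
    -- every tail is an integer multiple of 1/b
    have key : ∀ N : ℕ, ∃ z : ℤ, cantorTail q ε N = (z : ℝ) / (b : ℝ) := by
      intro N
      induction N with
      | zero =>
        refine ⟨r.num, ?_⟩
        rw [cantorTail_zero_eq, hr, Rat.cast_def]
      | succ n ih =>
        obtain ⟨z, hz⟩ := ih
        refine ⟨q n * z - ε n * b, ?_⟩
        have hrec := cantorTail_rec q ε hq hsum n
        have h1 : cantorTail q ε (n + 1) = (q n : ℝ) * ((z:ℝ) / b) - (ε n : ℝ) := by
          rw [← hz]; linarith
        rw [h1]
        push_cast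
        field_simp
    choose Z hZ using key
    -- eventually nonincreasing
    obtain ⟨k₀, hk₀⟩ := hcauchy (1 / b) (by positivity)
    have hmono : ∀ k ≥ k₀, Z (k + 1) ≤ Z k := by
      intro k hk
      have h := hk₀ k hk
      rw [hZ, hZ] at h
      have : ((Z (k+1) : ℝ) - Z k) / b < 1 / b := by
        rw [sub_div]; linarith
      have h2 : ((Z (k+1) : ℝ) - Z k) < 1 := by
        have := (div_lt_div_iff_of_pos_right hbpos).1 this
        linarith [this]
      have : Z (k + 1) - Z k < 1 := by exact_mod_cast h2
      omega
    -- bounded below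
    have hlb : ∀ k, (⌈C * b⌉ : ℤ) ≤ Z k := by
      intro k
      have h : C ≤ (Z k : ℝ) / b := by rw [← hZ]; exact hC k
      have h2 : C * b ≤ Z k := by
        have h3 := mul_le_mul_of_nonneg_right h hbpos.le
        rwa [div_mul_cancel₀ _ hbpos.ne'] at h3
      exact Int.ceil_le.2 h2
    -- least value among k ≥ k₀
    obtain ⟨lb, ⟨M, hMk₀, hMZ⟩, hlbmin⟩ :=
      Int.exists_least_of_bdd (P := fun z => ∃ k ≥ k₀, Z k = z)
        ⟨⌈C * b⌉, fun z ⟨k, _, hk⟩ => hk ▸ hlb k⟩ ⟨Z k₀, k₀, le_rfl, rfl⟩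
    -- Z is constant ≥ M
    have hconst : ∀ k ≥ M, Z k = lb := by
      intro k hk
      have hle : Z k ≤ lb := by
        rw [← hMZ]
        clear hMZ
        induction k, hk using Nat.le_induction with
        | base => exact le_rfl
        | succ n hn ih => exact le_trans (hmono n (le_trans hMk₀ hn)) ih
      have hge : lb ≤ Z k := hlbmin _ ⟨k, le_trans hMk₀ hk, rfl⟩
      omega
    refine ⟨(lb : ℚ) / (b : ℚ), M, fun k hk => ?_⟩
    have hrec := cantorTail_rec q ε hq hsum k
    have h1 : cantorTail q ε k = (lb : ℝ) / b := by rw [hZ, hconst k hk]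
    have h2 : cantorTail q ε (k + 1) = (lb : ℝ) / b := by
      rw [hZ, hconst (k + 1) (by omega)]
    rw [h1, h2] at hrec
    have hεk : (ε k : ℝ) = ((lb : ℝ) / b) * ((q k : ℝ) - 1) := by ring_nf; ring_nf at hrec; linarith
    have hcast : ((ε k : ℚ) : ℝ) = (((lb : ℚ) / (b : ℚ) * ((q k : ℚ) - 1)) : ℚ) := by
      push_cast
      linarith [hεk]
    exact_mod_cast hcast
  · rintro ⟨c, N₀, hc⟩
    have hval := cantorTail_const q ε hq hε c N₀ hc
    -- downward induction: cantorTail (N₀ - k) is rational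
    have down : ∀ k ≤ N₀, ∃ s : ℚ, cantorTail q ε (N₀ - k) = (s : ℝ) := by
      intro k hk
      induction k with
      | zero => exact ⟨c, by simpa using hval⟩
      | succ n ih =>
        obtain ⟨s, hs⟩ := ih (by omega)
        set m : ℕ := N₀ - (n + 1) with hm
        have hm1 : m + 1 = N₀ - n := by omega
        have hrec := cantorTail_rec q ε hq hsum m
        refine ⟨((ε m : ℚ) + s) / (q m : ℚ), ?_⟩
        have hqm : (q m : ℝ) ≠ 0 := (hqR m).ne'
        have : cantorTail q ε m = ((ε m : ℝ) + (s : ℝ)) / (q m : ℝ) := by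
          rw [eq_div_iff hqm, mul_comm, hrec, hm1, hs]
        rw [this]
        push_cast
        ring
    obtain ⟨s, hs⟩ := down N₀ le_rfl
    refine ⟨s, ?_⟩
    rw [← cantorTail_zero_eq]
    simpa using hs
end

section
/- Let (q_k) be an unbounded monotone non-decreasing sequence of integers with q_k ≥ 2 for all k. Then ∑_{k=1}^∞ k/(q_1 q_2 ⋯ q_k) is rational if and only if there exist a rational constant c and a positive integer k_0 such that k = c · (q_k − 1) for all k ≥ k_0. -/
open Finset Filter

namespace HTaux

variable (q : ℕ → ℕ)

noncomputable def P (n : ℕ) : ℝ := ∏ i ∈ Finset.range n, (q i : ℝ)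

noncomputable def f (k : ℕ) : ℝ := ((k : ℝ) + 1) / P q (k + 1)

variable {q}

lemma P_pos (hq : ∀ k, 2 ≤ q k) (n : ℕ) : 0 < P q n := by
  apply Finset.prod_pos
  intro i _
  have := hq i
  exact_mod_cast Nat.lt_of_lt_of_le (by norm_num) this

lemma P_succ (n : ℕ) : P q (n + 1) = P q n * (q n : ℝ) :=
  Finset.prod_range_succ _ _

lemma two_pow_le_P (hq : ∀ k, 2 ≤ q k) (n : ℕ) : (2 : ℝ) ^ n ≤ P q n := by
  calc (2:ℝ)^n = ∏ _i ∈ Finset.range n, (2:ℝ) := by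
        rw [Finset.prod_const, Finset.card_range]
    _ ≤ P q n := by
        apply Finset.prod_le_prod
        · intro i _; norm_num
        · intro i _; exact_mod_cast hq i

lemma f_pos (hq : ∀ k, 2 ≤ q k) (k : ℕ) : 0 < f q k := by
  have := P_pos hq (k + 1)
  unfold f
  positivity

lemma summable_f (hq : ∀ k, 2 ≤ q k) : Summable (f q) := by
  have ha : HasSum (fun k : ℕ => (k:ℝ) * (1/2)^k) ((1/2) / (1 - 1/2)^2) :=
    hasSum_coe_mul_geometric_of_norm_lt_one
      (by rw [Real.norm_eq_abs, abs_of_pos] <;> norm_num)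
  have hb : HasSum (fun k : ℕ => (1/2:ℝ)^k) (1 - 1/2)⁻¹ :=
    hasSum_geometric_of_lt_one (by norm_num) (by norm_num)
  have h2 : Summable (fun k : ℕ => ((k:ℝ)+1) * (1/2)^(k+1)) := by
    apply (((ha.summable.add hb.summable).mul_left ((1:ℝ)/2))).congr
    intro k
    rw [pow_succ]
    ring
  apply Summable.of_nonneg_of_le (fun k => (f_pos hq k).le) _ h2
  intro k
  have hP : (2:ℝ)^(k+1) ≤ P q (k+1) := two_pow_le_P hq (k+1)
  have hPpos : (0:ℝ) < P q (k+1) := P_pos hq (k+1)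
  have h1 : f q k ≤ ((k:ℝ)+1) / (2:ℝ)^(k+1) := by
    unfold f
    apply div_le_div_of_nonneg_left (by positivity) (by positivity) hP
  refine h1.trans (le_of_eq ?_)
  rw [div_pow, one_pow, mul_one_div]

lemma inv_P_tendsto (hq : ∀ k, 2 ≤ q k) :
    Tendsto (fun n => (P q n)⁻¹) atTop (nhds 0) := by
  apply squeeze_zero (fun n => inv_nonneg.2 (P_pos hq n).le) (g := fun n => ((1:ℝ)/2)^n)
  · intro n
    have h1 : (2:ℝ)^n ≤ P q n := two_pow_le_P hq n
    have h2 : (0:ℝ) < 2^n := by positivity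
    calc (P q n)⁻¹ ≤ ((2:ℝ)^n)⁻¹ := inv_anti₀ h2 h1
      _ = ((1:ℝ)/2)^n := by rw [one_div, inv_pow]
  · exact tendsto_pow_atTop_nhds_zero_of_lt_one (by norm_num) (by norm_num)

lemma cast_prod_eq_P (n : ℕ) :
    ((∏ i ∈ Finset.range n, (q i : ℚ) : ℚ) : ℝ) = P q n := by
  unfold P
  push_cast
  rfl

/-- Backward direction. -/
lemma backward (hq : ∀ k, 2 ≤ q k) (c : ℚ) (k₀ : ℕ)
    (h : ∀ k ≥ k₀, ((k : ℚ) + 1) = c * ((q k : ℚ) - 1)) :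
    ∃ r : ℚ, (∑' k : ℕ, f q k) = (r : ℝ) := by
  refine ⟨(∑ k ∈ Finset.range k₀, ((k : ℚ) + 1) / ∏ i ∈ Finset.range (k+1), (q i : ℚ))
      + c / ∏ i ∈ Finset.range k₀, (q i : ℚ), ?_⟩
  have hs := summable_f hq
  have key : ∀ n : ℕ, ∑ k ∈ Finset.range (k₀ + n), f q k
      = ∑ k ∈ Finset.range k₀, f q k + (c:ℝ) * ((P q k₀)⁻¹ - (P q (k₀+n))⁻¹) := by
    intro n
    induction n with
    | zero => simp
    | succ n ih =>
      rw [show k₀ + (n+1) = (k₀ + n) + 1 from rfl, Finset.sum_range_succ, ih]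
      have hstep : f q (k₀ + n)
          = (c:ℝ) * ((P q (k₀+n))⁻¹ - (P q (k₀+n+1))⁻¹) := by
        have hnum : ((k₀ + n : ℕ) : ℝ) + 1 = (c:ℝ) * ((q (k₀+n) : ℝ) - 1) := by
          exact_mod_cast congrArg (Rat.cast (K := ℝ)) (h (k₀+n) (Nat.le_add_right _ _))
        have hP1 : P q (k₀+n) ≠ 0 := (P_pos hq _).ne'
        have hQ : ((q (k₀+n) : ℝ)) ≠ 0 := by
          have := hq (k₀+n)
          positivity
        unfold f
        rw [hnum, P_succ]
        field_simp
        try ring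
      rw [hstep]
      ring
  -- limits
  have haux : Tendsto (fun n : ℕ => k₀ + n) atTop atTop := by
    simpa [Nat.add_comm] using tendsto_add_atTop_nat k₀
  have hlim1 : Tendsto (fun n => ∑ k ∈ Finset.range (k₀ + n), f q k) atTop
      (nhds (∑' k, f q k)) :=
    hs.hasSum.tendsto_sum_nat.comp haux
  have hlim2 : Tendsto (fun n => ∑ k ∈ Finset.range k₀, f q k
      + (c:ℝ) * ((P q k₀)⁻¹ - (P q (k₀+n))⁻¹)) atTop
      (nhds (∑ k ∈ Finset.range k₀, f q k + (c:ℝ) * ((P q k₀)⁻¹ - 0))) :=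
    Tendsto.const_add _ (Tendsto.const_mul _
      (Tendsto.const_sub _ ((inv_P_tendsto hq).comp haux)))
  have heq : (∑' k, f q k) = ∑ k ∈ Finset.range k₀, f q k + (c:ℝ) * ((P q k₀)⁻¹ - 0) := by
    apply tendsto_nhds_unique _ hlim2
    apply hlim1.congr
    intro n
    exact key n
  rw [heq, sub_zero]
  rw [Rat.cast_add]
  congr 1
  · rw [Rat.cast_sum]
    apply Finset.sum_congr rfl
    intro k _
    rw [Rat.cast_div, cast_prod_eq_P]
    unfold f
    push_cast
    ring
  · rw [Rat.cast_div, cast_prod_eq_P, div_eq_mul_inv]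


-- skeleton of forward direction
lemma forward (hq : ∀ k, 2 ≤ q k) (hmono : Monotone q)
    (hunbdd : ¬ BddAbove (Set.range q)) (r : ℚ)
    (hr : (∑' k : ℕ, f q k) = (r : ℝ)) :
    ∃ c : ℚ, ∃ k₀ : ℕ, ∀ k ≥ k₀, ((k : ℚ) + 1) = c * ((q k : ℚ) - 1) := by
  have hs := summable_f hq
  have hfpos := f_pos hq
  -- tail sums
  set R : ℕ → ℝ := fun n => ∑' k, f q (k + n) with hR
  have hRs : ∀ n, Summable (fun k => f q (k + n)) := fun n => (summable_nat_add_iff n).2 hs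
  have hRpos : ∀ n, 0 < R n := fun n => Summable.tsum_pos (hRs n) (fun k => (hfpos _).le) 0 (hfpos _)
  have tail : ∀ n, ∑ k ∈ Finset.range n, f q k + R n = ∑' k, f q k :=
    fun n => Summable.sum_add_tsum_nat_add n hs
  have Rrec : ∀ n, R n = f q n + R (n + 1) := by
    intro n
    show (∑' k, f q (k + n)) = f q n + ∑' k, f q (k + (n+1))
    rw [Summable.tsum_eq_zero_add (hRs n)]
    simp only [Nat.zero_add]
    congr 1
    apply tsum_congr
    intro k
    congr 1
    omega
  -- the integer sequence
  set t : ℕ → ℤ := fun n => r.num * ∏ i ∈ Finset.range n, (q i : ℤ)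
      - (r.den : ℤ) * ∑ k ∈ Finset.range n, ((k:ℤ)+1) * ∏ i ∈ Finset.Ico (k+1) n, (q i : ℤ)
    with htdef
  have hbne : ((r.den : ℝ)) ≠ 0 := by
    have := r.den_nz
    exact_mod_cast this
  have hbS : (r.den : ℝ) * (∑' k, f q k) = (r.num : ℝ) := by
    rw [hr, Rat.cast_def]
    field_simp
  have ht : ∀ n, (t n : ℝ) = (r.den : ℝ) * P q n * R n := by
    intro n
    have hRn : R n = (∑' k, f q k) - ∑ k ∈ Finset.range n, f q k := by
      have := tail n; linarith
    have hterm : ∀ k ∈ Finset.range n, P q n * f q k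
        = ((k:ℝ)+1) * ∏ i ∈ Finset.Ico (k+1) n, (q i : ℝ) := by
      intro k hk
      have hk' : k + 1 ≤ n := Finset.mem_range.1 hk
      have hsplit : P q (k+1) * ∏ i ∈ Finset.Ico (k+1) n, (q i:ℝ) = P q n :=
        Finset.prod_range_mul_prod_Ico _ hk'
      have hPk : P q (k+1) ≠ 0 := (P_pos hq _).ne'
      unfold f
      rw [← hsplit]
      field_simp
    have hsum : ∑ k ∈ Finset.range n, P q n * f q k
        = ∑ k ∈ Finset.range n, ((k:ℝ)+1) * ∏ i ∈ Finset.Ico (k+1) n, (q i : ℝ) :=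
      Finset.sum_congr rfl hterm
    have rhs_eq : (r.den:ℝ) * P q n * R n
        = (r.num:ℝ) * P q n
          - (r.den:ℝ) * ∑ k ∈ Finset.range n, ((k:ℝ)+1) * ∏ i ∈ Finset.Ico (k+1) n, (q i : ℝ) := by
      calc (r.den:ℝ) * P q n * R n
          = ((r.den:ℝ) * (∑' k, f q k)) * P q n
            - (r.den:ℝ) * (P q n * ∑ k ∈ Finset.range n, f q k) := by rw [hRn]; ring
        _ = (r.num:ℝ) * P q n - (r.den:ℝ) * ∑ k ∈ Finset.range n, P q n * f q k := by
            rw [hbS, Finset.mul_sum]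
        _ = _ := by rw [hsum]
    rw [rhs_eq, htdef]
    unfold P
    push_cast
    ring
  have tpos : ∀ n, 0 < t n := by
    intro n
    have h1 : (0:ℝ) < (t n : ℝ) := by
      rw [ht n]
      have h2 := P_pos hq n
      have h3 := hRpos n
      have h4 : (0:ℝ) < (r.den:ℝ) := by
        have := r.den_nz
        have h5 : 0 < r.den := Nat.pos_of_ne_zero this
        exact_mod_cast h5
      positivity
    exact_mod_cast h1
  have trec : ∀ n, (q n : ℤ) * t n = (r.den : ℤ) * ((n:ℤ)+1) + t (n+1) := by
    intro n
    have hP1 : P q (n+1) ≠ 0 := (P_pos hq _).ne'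
    have hfn : P q n * (q n:ℝ) * f q n = (n:ℝ)+1 := by
      rw [← P_succ]
      unfold f
      field_simp
    have key : ((q n:ℝ)) * (t n:ℝ) = (r.den:ℝ)*((n:ℝ)+1) + ((t (n+1)):ℝ) := by
      rw [ht n, ht (n+1)]
      calc (q n:ℝ) * ((r.den:ℝ) * P q n * R n)
          = (r.den:ℝ) * (P q n * (q n:ℝ) * f q n)
            + ((r.den:ℝ) * (P q n * (q n:ℝ))) * R (n+1) := by rw [Rrec n]; ring
        _ = (r.den:ℝ)*((n:ℝ)+1) + (r.den:ℝ) * P q (n+1) * R (n+1) := by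
            rw [hfn, P_succ]; try ring
    exact_mod_cast key
  have tupper : ∀ n, (t n : ℝ)
      ≤ (r.den : ℝ) * (((n:ℝ)+1)/((q n:ℝ)-1) + 1/((q n:ℝ)-1)^2) := by
    intro n
    set Q := (q n : ℝ) with hQdef
    have hQ2 : (2:ℝ) ≤ Q := by rw [hQdef]; exact_mod_cast hq n
    have hQ0 : (0:ℝ) < Q := by linarith
    have hQ1 : (1:ℝ) < Q := by linarith
    have hx1 : Q⁻¹ < 1 := by
      rw [inv_lt_one_iff₀]; right; exact hQ1
    have hx0 : (0:ℝ) < Q⁻¹ := inv_pos.2 hQ0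
    have hPn : (0:ℝ) < P q n := P_pos hq n
    have hPlow : ∀ k : ℕ, P q n * Q^(k+1) ≤ P q (n+k+1) := by
      intro k
      induction k with
      | zero =>
        rw [pow_one]
        exact le_of_eq (P_succ n).symm
      | succ k ih =>
        have hq' : Q ≤ (q (n+k+1) : ℝ) := by
          rw [hQdef]
          exact_mod_cast hmono (by omega : n ≤ n+k+1)
        calc P q n * Q^(k+1+1) = (P q n * Q^(k+1)) * Q := by ring
          _ ≤ P q (n+k+1) * Q := mul_le_mul_of_nonneg_right ih hQ0.le
          _ ≤ P q (n+k+1) * (q (n+k+1):ℝ) :=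
              mul_le_mul_of_nonneg_left hq' (P_pos hq _).le
          _ = P q (n+(k+1)+1) := (P_succ (n+k+1)).symm
    have hterm : ∀ k : ℕ, f q (k + n)
        ≤ (((n:ℝ)+1) * Q⁻¹ * (Q⁻¹)^k + Q⁻¹ * ((k:ℝ) * (Q⁻¹)^k)) / P q n := by
      intro k
      have h1 : P q n * Q^(k+1) ≤ P q (k+n+1) := by
        rw [show k+n+1 = n+k+1 by omega]; exact hPlow k
      have hpos1 : (0:ℝ) < P q n * Q^(k+1) := by positivity
      have h2 : f q (k+n) ≤ (((k+n:ℕ):ℝ)+1) / (P q n * Q^(k+1)) := by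
        unfold f
        apply div_le_div_of_nonneg_left (by positivity) hpos1 h1
      refine h2.trans (le_of_eq ?_)
      have hQk : Q^(k+1) ≠ 0 := by positivity
      have hQne : Q ≠ 0 := hQ0.ne'
      simp only [inv_pow]
      push_cast
      field_simp
      ring
    have h1 := hasSum_geometric_of_lt_one hx0.le hx1
    have h2 := hasSum_coe_mul_geometric_of_norm_lt_one (r := Q⁻¹)
      (by rw [Real.norm_eq_abs, abs_of_pos hx0]; exact hx1)
    have hgsum : HasSum
        (fun k : ℕ => (((n:ℝ)+1) * Q⁻¹ * (Q⁻¹)^k + Q⁻¹ * ((k:ℝ) * (Q⁻¹)^k)) / P q n)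
        (((((n:ℝ)+1) * Q⁻¹) * (1-Q⁻¹)⁻¹ + Q⁻¹ * (Q⁻¹/(1-Q⁻¹)^2)) / P q n) :=
      ((h1.mul_left _).add (h2.mul_left _)).div_const _
    have hle : R n ≤ ((((n:ℝ)+1) * Q⁻¹) * (1-Q⁻¹)⁻¹ + Q⁻¹ * (Q⁻¹/(1-Q⁻¹)^2)) / P q n :=
      le_of_le_of_eq (Summable.tsum_le_tsum hterm (hRs n) hgsum.summable) hgsum.tsum_eq
    have h1mx : (0:ℝ) < 1 - Q⁻¹ := by linarith
    have hQm1 : (0:ℝ) < Q - 1 := by linarith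
    have hval : (((n:ℝ)+1) * Q⁻¹) * (1-Q⁻¹)⁻¹ + Q⁻¹ * (Q⁻¹/(1-Q⁻¹)^2)
        = ((n:ℝ)+1)/(Q-1) + 1/(Q-1)^2 := by
      field_simp
    rw [ht n]
    calc (r.den:ℝ) * P q n * R n
        ≤ (r.den:ℝ) * P q n
          * (((((n:ℝ)+1) * Q⁻¹) * (1-Q⁻¹)⁻¹ + Q⁻¹ * (Q⁻¹/(1-Q⁻¹)^2)) / P q n) := by
          apply mul_le_mul_of_nonneg_left hle
          positivity
      _ = (r.den:ℝ) * ((((n:ℝ)+1) * Q⁻¹) * (1-Q⁻¹)⁻¹ + Q⁻¹ * (Q⁻¹/(1-Q⁻¹)^2)) := by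
          field_simp
      _ = (r.den:ℝ) * (((n:ℝ)+1)/(Q-1) + 1/(Q-1)^2) := by rw [hval]
  have tstep : ∀ n, (r.den : ℤ) + 2 ≤ (q n : ℤ) → t (n+1) ≤ t n := by
    intro n hn
    have hQ2 : (2:ℝ) ≤ (q n:ℝ) := by exact_mod_cast hq n
    have hQm1 : (0:ℝ) < (q n:ℝ) - 1 := by linarith
    have hbQ : (r.den:ℝ) < (q n:ℝ) - 1 := by
      have : ((r.den:ℝ)) + 2 ≤ (q n:ℝ) := by exact_mod_cast hn
      linarith
    have h1 : ((q n:ℤ) - 1) * t n ≤ (r.den:ℤ) * ((n:ℤ)+1) := by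
      have h2 : ((q n:ℝ)-1) * (t n:ℝ)
          ≤ (r.den:ℝ)*((n:ℝ)+1) + (r.den:ℝ)/((q n:ℝ)-1) := by
        calc ((q n:ℝ)-1)*(t n:ℝ)
            ≤ ((q n:ℝ)-1)*((r.den:ℝ) * (((n:ℝ)+1)/((q n:ℝ)-1) + 1/((q n:ℝ)-1)^2)) :=
              mul_le_mul_of_nonneg_left (tupper n) hQm1.le
          _ = (r.den:ℝ)*((n:ℝ)+1) + (r.den:ℝ)/((q n:ℝ)-1) := by
              field_simp
      have h3 : (r.den:ℝ)/((q n:ℝ)-1) < 1 := by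
        rw [div_lt_one hQm1]; exact hbQ
      have hreal : (((q n:ℤ) - 1) * t n : ℝ) < ((r.den:ℤ) * ((n:ℤ)+1) : ℤ) + 1 := by
        push_cast
        linarith
      have hint : ((q n:ℤ) - 1) * t n < (r.den:ℤ) * ((n:ℤ)+1) + 1 := by
        exact_mod_cast hreal
      omega
    have h2 := trec n
    have h1' : (q n:ℤ) * t n - t n ≤ (r.den:ℤ) * ((n:ℤ)+1) := by
      rw [← sub_one_mul]; exact h1
    linarith
  -- eventually constant
  obtain ⟨M, hM⟩ : ∃ M, r.den + 2 ≤ q M := by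
    rcases not_bddAbove_iff.1 hunbdd (r.den + 1) with ⟨y, ⟨N, rfl⟩, hy⟩
    exact ⟨N, by omega⟩
  have hstepN : ∀ n, M ≤ n → t (n+1) ≤ t n := by
    intro n hn
    apply tstep
    have h1 := hmono hn
    have : r.den + 2 ≤ q n := le_trans hM h1
    exact_mod_cast this
  have hanti : ∀ m n, M ≤ m → m ≤ n → t n ≤ t m := by
    intro m n hMm hmn
    induction n, hmn using Nat.le_induction with
    | base => exact le_refl _
    | succ n hmn ih => exact le_trans (hstepN n (le_trans hMm hmn)) ih
  set u : ℕ → ℕ := fun m => (t (M+m)).toNat with hu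
  obtain ⟨m₁, hm₁⟩ : sInf (Set.range u) ∈ Set.range u :=
    Nat.sInf_mem (Set.range_nonempty u)
  have hconst : ∀ n, M + m₁ ≤ n → t n = t (M + m₁) := by
    intro n hn
    have hle1 : t n ≤ t (M + m₁) := hanti (M+m₁) n (by omega) hn
    have hge : u m₁ ≤ u (n - M) := by
      rw [hm₁]; exact Nat.sInf_le ⟨n - M, rfl⟩
    have hge2 : t (M + m₁) ≤ t n := by
      have e1 : ((t (M + (n - M))).toNat : ℤ) = t (M + (n-M)) :=
        Int.toNat_of_nonneg (tpos _).le
      have e2 : ((t (M + m₁)).toNat : ℤ) = t (M + m₁) :=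
        Int.toNat_of_nonneg (tpos _).le
      have e3 : M + (n - M) = n := by omega
      rw [e3] at e1
      have : ((t (M+m₁)).toNat : ℤ) ≤ ((t (M + (n-M))).toNat : ℤ) := by
        exact_mod_cast hge
      rw [e3] at this
      rw [e1, e2] at this
      exact this
    omega
  have hkey : ∀ n, M + m₁ ≤ n → (r.den:ℤ) * ((n:ℤ)+1) = t (M+m₁) * ((q n:ℤ) - 1) := by
    intro n hn
    have h2 := trec n
    rw [hconst n hn, hconst (n+1) (by omega)] at h2
    ring_nf at h2 ⊢
    linarith
  refine ⟨((t (M+m₁) : ℤ) : ℚ) / (r.den : ℚ), M + m₁, ?_⟩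
  intro k hk
  have h := hkey k hk
  have hcast : (r.den:ℚ) * ((k:ℚ)+1) = ((t (M+m₁):ℤ):ℚ) * ((q k:ℚ) - 1) := by
    exact_mod_cast h
  have hbq : (r.den:ℚ) ≠ 0 := by
    have := r.den_nz
    exact_mod_cast this
  field_simp
  linarith [hcast]

end HTaux


/-- (Hančl–Tijdeman) Let `(q_k)` be an unbounded monotone non-decreasing
sequence of integers `≥ 2`. Then `∑_{k=1}^∞ k/(q_1⋯q_k)` is rational iff `k/(q_k − 1)` is a
(rational) constant `c` for all `k ≥ k₀`. (Sequences are 0-indexed, so the paper's `k`-th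
numerator is `k = (k₀-indexed k) + 1`.) -/
theorem hancl_tijdeman_rational_iff_const_ratio_of_k
    (q : ℕ → ℕ) (hq : ∀ k, 2 ≤ q k) (hmono : Monotone q)
    (hunbdd : ¬ BddAbove (Set.range q)) :
    (∃ r : ℚ, (∑' k : ℕ, ((k : ℝ) + 1) / ∏ i ∈ Finset.range (k + 1), (q i : ℝ)) = (r : ℝ)) ↔
      ∃ c : ℚ, ∃ k₀ : ℕ, ∀ k ≥ k₀, ((k : ℚ) + 1) = c * ((q k : ℚ) - 1) := by
  have hfun : (fun k : ℕ => ((k : ℝ) + 1) / ∏ i ∈ Finset.range (k + 1), (q i : ℝ))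
      = HTaux.f q := by
    funext k
    rfl
  rw [hfun]
  constructor
  · rintro ⟨r, hr⟩
    exact HTaux.forward hq hmono hunbdd r hr
  · rintro ⟨c, k₀, h⟩
    exact HTaux.backward hq c k₀ h
end
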